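/- arXiv:1605.08861 — 4 statements merged into one kernel-verified Lean document; each statement's English description precedes it below -/
import Mathlib

section
/- Itô integral along a continuous bounded-variation path equals the Stieltjes integral: Let ξ:[0,T]×D([0,T],U)→ℝ^d be an admissible functional integrand and let B∈CBV([0,T],U). Then the pathwise Itô integral ∫_0^T ξ(s,B) dB(s) = lim_{n→∞} Σ_{s∈T_n} ξ(s,B^{n,s−})·(B(s')−B(s)) exists and is equal to the Lebesgue–Stieltjes integral of s↦ξ(s,B) with respect to dB(s). -/
open Filter Set MeasureTheory

noncomputable section

/-- A `d`-dimensional path, i.e. a function from time to `ℝ^d`. -/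
abbrev FPath (d : ℕ) := ℝ → (Fin d → ℝ)

/-- A non-anticipative functional type: depends on time, a `d`-dimensional path and an
`m`-dimensional (bounded-variation) path. -/
abbrev Fnl (d m : ℕ) := ℝ → FPath d → FPath m → ℝ

/-- The path `X` stopped at time `t`: `X^t(s) = X(t ∧ s)`. -/
def stopped {d : ℕ} (X : FPath d) (t : ℝ) : FPath d := fun s => X (min t s)

/-- Supremum distance `‖X - Y‖_∞ = sup_{u ∈ [0,T]} |X(u) - Y(u)|`. -/
noncomputable def supDist {d : ℕ} (T : ℝ) (X Y : FPath d) : ℝ :=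
  ⨆ u : Set.Icc (0:ℝ) T, ‖X u.1 - Y u.1‖

/-- `X ∈ D([0,T],U)`: càdlàg on `[0,T]` with values in `U` and left limits in `U`. -/
def IsCadlag {d : ℕ} (T : ℝ) (U : Set (Fin d → ℝ)) (X : FPath d) : Prop :=
  (∀ t ∈ Set.Icc (0:ℝ) T, X t ∈ U) ∧
  (∀ t ∈ Set.Ico (0:ℝ) T, Tendsto X (nhdsWithin t (Set.Ioi t)) (nhds (X t))) ∧
  (∀ t ∈ Set.Ioc (0:ℝ) T, ∃ L ∈ U, Tendsto X (nhdsWithin t (Set.Iio t)) (nhds L))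

/-- `A ∈ CBV([0,T],S)`: continuous, `S`-valued, components of bounded variation on `[0,T]`. -/
def IsCBV {m : ℕ} (T : ℝ) (S : Set (Fin m → ℝ)) (A : FPath m) : Prop :=
  (∀ t ∈ Set.Icc (0:ℝ) T, A t ∈ S) ∧ ContinuousOn A (Set.Icc 0 T) ∧
  (∀ i, BoundedVariationOn (fun t => A t i) (Set.Icc 0 T))

/-- `X ∈ C([0,T],U)`: a continuous path (in particular càdlàg). -/
def IsContPath {d : ℕ} (T : ℝ) (U : Set (Fin d → ℝ)) (X : FPath d) : Prop :=
  IsCadlag T U X ∧ ContinuousOn X (Set.Icc 0 T)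

/-- `I` is the Lebesgue–Stieltjes integral `∫_s^t g(r) dA(r)` of `g` against the (continuous,
bounded-variation) integrator `A`, via a Jordan-type decomposition `A = P - N` into monotone
right-continuous parts. -/
def IsLSIntegral (g : ℝ → ℝ) (A : ℝ → ℝ) (s t : ℝ) (I : ℝ) : Prop :=
  ∃ P N : StieltjesFunction ℝ,
    (∀ r ∈ Set.Icc s t, A r = P r - N r) ∧
    IntervalIntegrable g P.measure s t ∧ IntervalIntegrable g N.measure s t ∧
    I = (∫ r in s..t, g r ∂P.measure) - (∫ r in s..t, g r ∂N.measure)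

/-- Non-anticipativity: `F(t,X,A) = F(t,X^t,A^t)`. -/
def NonAnticipative {d m : ℕ} (T : ℝ) (U : Set (Fin d → ℝ)) (S : Set (Fin m → ℝ))
    (F : Fnl d m) : Prop :=
  ∀ t ∈ Set.Icc (0:ℝ) T, ∀ X, IsCadlag T U X → ∀ A, IsCBV T S A →
    F t X A = F t (stopped X t) (stopped A t)

/-- Boundedness-preserving functional. -/
def BoundednessPreserving {d m : ℕ} (T : ℝ) (U : Set (Fin d → ℝ)) (S : Set (Fin m → ℝ))
    (F : Fnl d m) : Prop :=
  ∀ A, IsCBV T S A → ∀ K : Set (Fin d → ℝ), K ⊆ U → IsCompact K →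
    ∃ C : ℝ, ∀ t ∈ Set.Icc (0:ℝ) T, ∀ X, IsCadlag T K X → |F t X A| ≤ C

/-- Continuity at fixed times. -/
def ContAtFixedTimes {d m : ℕ} (T : ℝ) (U : Set (Fin d → ℝ)) (S : Set (Fin m → ℝ))
    (F : Fnl d m) : Prop :=
  ∀ ε > (0:ℝ), ∀ t ∈ Set.Icc (0:ℝ) T, ∀ X, IsCadlag T U X → ∀ A, IsCBV T S A →
    ∃ η > (0:ℝ), ∀ Y, IsCadlag T U Y → supDist T (stopped X t) (stopped Y t) < η →
      |F t X A - F t Y A| < ε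

/-- Left-continuity of a non-anticipative functional. -/
def LeftCont {d m : ℕ} (T : ℝ) (U : Set (Fin d → ℝ)) (S : Set (Fin m → ℝ))
    (F : Fnl d m) : Prop :=
  ∀ t ∈ Set.Ioc (0:ℝ) T, ∀ ε > (0:ℝ), ∀ X, IsCadlag T U X → ∀ A, IsCBV T S A →
    ∃ η > (0:ℝ), ∀ h ∈ Set.Ico (0:ℝ) η, ∀ Y, IsCadlag T U Y →
      supDist T (stopped X t) (stopped Y (t - h)) < η →
      |F t X A - F (t - h) Y A| < ε

/-- Continuity in `X` locally uniformly in `t`. -/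
def ContInXLocUnifT {d m : ℕ} (T : ℝ) (U : Set (Fin d → ℝ)) (S : Set (Fin m → ℝ))
    (F : Fnl d m) : Prop :=
  ∀ ε > (0:ℝ), ∀ t ∈ Set.Icc (0:ℝ) T, ∀ X, IsCadlag T U X → ∀ A, IsCBV T S A →
    ∃ η > (0:ℝ), ∀ u ∈ Set.Icc (0:ℝ) T, ∀ Y, IsCadlag T U Y →
      supDist T X Y < η → |t - u| < η → |F u X A - F u Y A| < ε

/-- Vertical perturbation `X + v·1_{[t,∞)}`. -/
def vertPerturb {d : ℕ} (t : ℝ) (X : FPath d) (v : Fin d → ℝ) : FPath d :=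
  fun s => if t ≤ s then X s + v else X s

/-- Vertical differentiability of `F` at `(t,X,A)`. -/
def VertDiffAt {d m : ℕ} (F : Fnl d m) (t : ℝ) (X : FPath d) (A : FPath m) : Prop :=
  DifferentiableAt ℝ (fun v : Fin d → ℝ => F t (vertPerturb t X v) A) 0

/-- The vertical derivative `∇_X F(t,X,A)` (components `∂_i F`). -/
noncomputable def vertD {d m : ℕ} (F : Fnl d m) (t : ℝ) (X : FPath d) (A : FPath m) :
    Fin d → ℝ :=
  fun i => fderiv ℝ (fun v : Fin d → ℝ => F t (vertPerturb t X v) A) 0 (Pi.single i 1)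

/-- Second vertical derivatives `∂_{ij}F = ∂_i(∂_j F)`. -/
noncomputable def vertD2 {d m : ℕ} (F : Fnl d m) (t : ℝ) (X : FPath d) (A : FPath m) :
    Fin d → Fin d → ℝ :=
  fun i j => vertD (fun u Y B => vertD F u Y B j) t X A i

/-- The time-augmented bounded-variation path `(A_0, A_1, …, A_m)` with `A_0(r) = r`. -/
def timeAug {m : ℕ} (A : FPath m) : ℝ → Fin (m+1) → ℝ := fun r => Fin.cons r (A r)

/-- `F` is horizontally differentiable with horizontal derivative `HD = (𝒟_0F, …, 𝒟_mF)`. -/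
def HasHorizDeriv {d m : ℕ} (T : ℝ) (U : Set (Fin d → ℝ)) (S : Set (Fin m → ℝ))
    (F : Fnl d m) (HD : Fin (m+1) → Fnl d m) : Prop :=
  (∀ i, NonAnticipative T U S (HD i)) ∧
  (∀ i, BoundednessPreserving T U S (HD i)) ∧
  (∀ s t : ℝ, 0 ≤ s → s < t → t ≤ T → ∀ X, IsCadlag T U X → ∀ A, IsCBV T S A →
    (∀ i, Measurable fun r : Set.Icc s t => HD i r.1 (stopped X s) A) ∧
    ∃ I : Fin (m+1) → ℝ,
      (∀ i, IsLSIntegral (fun r => HD i r (stopped X s) A) (fun r => timeAug A r i) s t (I i)) ∧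
      F t (stopped X s) A - F s (stopped X s) A = ∑ i, I i)

/-- The class `ℂ^{1,2}_b(U,S)`. -/
structure C12b {d m : ℕ} (T : ℝ) (U : Set (Fin d → ℝ)) (S : Set (Fin m → ℝ))
    (F : Fnl d m) : Prop where
  nonanticip : NonAnticipative T U S F
  leftCont : LeftCont T U S F
  horiz : ∃ HD : Fin (m+1) → Fnl d m,
    HasHorizDeriv T U S F HD ∧ ∀ i, ContAtFixedTimes T U S (HD i)
  vdiff : ∀ t ∈ Set.Icc (0:ℝ) T, ∀ X, IsCadlag T U X → ∀ A, IsCBV T S A → VertDiffAt F t X A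
  vdiff2 : ∀ j : Fin d, ∀ t ∈ Set.Icc (0:ℝ) T, ∀ X, IsCadlag T U X → ∀ A, IsCBV T S A →
    VertDiffAt (fun u Y B => vertD F u Y B j) t X A
  vd_leftCont : ∀ i, LeftCont T U S (fun u Y B => vertD F u Y B i)
  vd_bdd : ∀ i, BoundednessPreserving T U S (fun u Y B => vertD F u Y B i)
  vd2_leftCont : ∀ i j, LeftCont T U S (fun u Y B => vertD2 F u Y B i j)
  vd2_bdd : ∀ i j, BoundednessPreserving T U S (fun u Y B => vertD2 F u Y B i j)

/-- The class `ℂ^{1,2}_c(U,S)`. -/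
def C12c {d m : ℕ} (T : ℝ) (U : Set (Fin d → ℝ)) (S : Set (Fin m → ℝ)) (F : Fnl d m) : Prop :=
  C12b T U S F ∧ ContInXLocUnifT T U S F ∧ BoundednessPreserving T U S F

/-- The successor `s'` of `s` in the partition `P` of `[0,T]`. -/
noncomputable def nextPt (P : Finset ℝ) (T s : ℝ) : ℝ :=
  if h : (P.filter (fun u => s < u)).Nonempty then (P.filter (fun u => s < u)).min' h else T

/-- The largest partition point `≤ t`. -/
noncomputable def prevPt (P : Finset ℝ) (t : ℝ) : ℝ :=
  if h : (P.filter (fun u => u ≤ t)).Nonempty then (P.filter (fun u => u ≤ t)).max' h else 0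

/-- The step-path approximation `X^n(t) = Σ_{s ∈ T_n} X(s')1_{[s,s')}(t) + X(T)1_{{T}}(t)`. -/
noncomputable def stepApprox {d : ℕ} (P : Finset ℝ) (T : ℝ) (X : FPath d) : FPath d :=
  fun t => if t = T then X T else X (nextPt P T (prevPt P t))

/-- `X^{n,s-} = lim_{r ↑ s} (X^n)^r`: equals `X^n` before `s` and `X(s)` from `s` on. -/
noncomputable def stepStopApprox {d : ℕ} (P : Finset ℝ) (T : ℝ) (X : FPath d) (s : ℝ) : FPath d :=
  fun u => if u < s then stepApprox P T X u else X s

/-- A refining sequence of partitions of `[0,T]`: nested, containing `0` and `T`,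
with mesh tending to zero. -/
structure RefiningSeq (T : ℝ) where
  part : ℕ → Finset ℝ
  subset_Icc : ∀ n, (part n : Set ℝ) ⊆ Set.Icc (0:ℝ) T
  zero_mem : ∀ n, (0:ℝ) ∈ part n
  endpoint_mem : ∀ n, T ∈ part n
  nested : ∀ n, part n ⊆ part (n+1)
  mesh_to_zero : ∀ ε > (0:ℝ), ∃ N, ∀ n ≥ N, ∀ s ∈ part n, nextPt (part n) T s - s < ε

/-- The approximating Itô–Riemann sum `Σ_{s ∈ P, s ≤ t} ξ(s, X^{n,s-})·(X(s') - X(s))`. -/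
noncomputable def itoSum {d : ℕ} (P : Finset ℝ) (T : ℝ) (ξ : ℝ → FPath d → Fin d → ℝ)
    (X : FPath d) (t : ℝ) : ℝ :=
  ∑ s ∈ P.filter (fun u => u ≤ t),
    ∑ i, ξ s (stepStopApprox P T X s) i * (X (nextPt P T s) i - X s i)

/-- `I = ∫_0^t ξ(s,X) dX(s)`, the pathwise Itô integral along the refining sequence `R`. -/
def IsItoIntegral {d : ℕ} {T : ℝ} (R : RefiningSeq T) (ξ : ℝ → FPath d → Fin d → ℝ)
    (X : FPath d) (t : ℝ) (I : ℝ) : Prop :=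
  Tendsto (fun n => itoSum (R.part n) T ξ X t) atTop (nhds I)

/-- A one-dimensional path `Z` admits the continuous quadratic variation `Q` along `R`. -/
def HasQV1 {T : ℝ} (R : RefiningSeq T) (Z : ℝ → ℝ) (Q : ℝ → ℝ) : Prop :=
  Q 0 = 0 ∧ ContinuousOn Q (Set.Icc 0 T) ∧
  ∀ t ∈ Set.Ioc (0:ℝ) T,
    Tendsto (fun n => ∑ s ∈ (R.part n).filter (fun u => u ≤ t),
      (Z (nextPt (R.part n) T s) - Z s)^2) atTop (nhds (Q t))

/-- `Q = [Z_i, Z_j]` is the covariation of `Z_i` and `Z_j` along `R`, via polarization. -/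
def IsCovar {T : ℝ} (R : RefiningSeq T) (Zi Zj : ℝ → ℝ) (Q : ℝ → ℝ) : Prop :=
  ∃ Qi Qj Qij : ℝ → ℝ, HasQV1 R Zi Qi ∧ HasQV1 R Zj Qj ∧
    HasQV1 R (fun s => Zi s + Zj s) Qij ∧
    ∀ t ∈ Set.Icc (0:ℝ) T, Q t = (Qij t - Qi t - Qj t) / 2

/-- A `d`-dimensional path admits the continuous quadratic variation along `R`. -/
def HasContQV {d : ℕ} {T : ℝ} (R : RefiningSeq T) (X : FPath d) : Prop :=
  ∀ i j : Fin d, ∃ Q, HasQV1 R (fun s => X s i + X s j) Q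

/-- An admissible functional integrand: `ξ(t,X) = ∇_X F(t,X,A)` for some
`F ∈ ℂ^{1,2}_c(U,S)` and `A ∈ CBV([0,T],S)`. -/
def AdmissibleIntegrand {d : ℕ} (T : ℝ) (U : Set (Fin d → ℝ))
    (ξ : ℝ → FPath d → Fin d → ℝ) : Prop :=
  ∃ (m : ℕ) (S : Set (Fin m → ℝ)) (A : FPath m) (F : Fnl d m),
    IsOpen S ∧ IsCBV T S A ∧ C12c T U S F ∧
    ∀ t ∈ Set.Icc (0:ℝ) T, ∀ X, IsCadlag T U X → ξ t X = vertD F t X A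

/-- The set `S × W ⊆ ℝ^{m+p}`. -/
def pairSet {m p : ℕ} (S : Set (Fin m → ℝ)) (W : Set (Fin p → ℝ)) : Set (Fin (m+p) → ℝ) :=
  {v | (fun i => v (Fin.castAdd p i)) ∈ S ∧ (fun j => v (Fin.natAdd m j)) ∈ W}

/-- First component of a combined path `(A,B)`. -/
def fstPath {m p : ℕ} (AB : FPath (m+p)) : FPath m := fun r i => AB r (Fin.castAdd p i)

/-- Second component of a combined path `(A,B)`. -/
def sndPath {m p : ℕ} (AB : FPath (m+p)) : FPath p := fun r j => AB r (Fin.natAdd m j)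

end

noncomputable section AuxLemmas

open Filter Set MeasureTheory

namespace ItoAux

variable {T : ℝ} {P : Finset ℝ}

lemma nextPt_mem_Icc (hP : ↑P ⊆ Set.Icc (0:ℝ) T) (hT : 0 ≤ T) (s : ℝ) :
    nextPt P T s ∈ Set.Icc (0:ℝ) T := by
  unfold nextPt
  split_ifs with h
  · exact hP (Finset.mem_coe.2 (Finset.mem_filter.1 (Finset.min'_mem _ h)).1)
  · exact ⟨hT, le_rfl⟩

lemma le_nextPt {s : ℝ} (hsT : s ≤ T) : s ≤ nextPt P T s := by
  unfold nextPt
  split_ifs with h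
  · exact (Finset.mem_filter.1 (Finset.min'_mem _ h)).2.le
  · exact hsT

lemma nextPt_le {s u : ℝ} (hu : u ∈ P) (hsu : s < u) : nextPt P T s ≤ u := by
  have hne : (P.filter (fun v => s < v)).Nonempty := ⟨u, Finset.mem_filter.2 ⟨hu, hsu⟩⟩
  unfold nextPt
  rw [dif_pos hne]
  exact Finset.min'_le _ _ (Finset.mem_filter.2 ⟨hu, hsu⟩)

lemma prevPt_mem (h0 : (0:ℝ) ∈ P) {t : ℝ} (ht : 0 ≤ t) :
    prevPt P t ∈ P ∧ prevPt P t ≤ t := by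
  have hne : (P.filter (fun v => v ≤ t)).Nonempty := ⟨0, Finset.mem_filter.2 ⟨h0, ht⟩⟩
  unfold prevPt
  rw [dif_pos hne]
  have := Finset.mem_filter.1 (Finset.max'_mem _ hne)
  exact ⟨this.1, this.2⟩

lemma le_prevPt {p t : ℝ} (hp : p ∈ P) (hpt : p ≤ t) : p ≤ prevPt P t := by
  have hne : (P.filter (fun v => v ≤ t)).Nonempty := ⟨p, Finset.mem_filter.2 ⟨hp, hpt⟩⟩
  unfold prevPt
  rw [dif_pos hne]
  apply Finset.le_max'
  exact Finset.mem_filter.2 ⟨hp, hpt⟩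

lemma lt_nextPt_prevPt {t : ℝ} (htT : t < T) :
    t < nextPt P T (prevPt P t) := by
  unfold nextPt
  split_ifs with h
  · have hmem := Finset.mem_filter.1 (Finset.min'_mem _ h)
    by_contra hc
    push_neg at hc
    exact absurd (le_prevPt hmem.1 hc) (not_le.2 hmem.2)
  · exact htT


variable {d : ℕ} {B : FPath d}

lemma stepApprox_eq_B (hP : ↑P ⊆ Set.Icc (0:ℝ) T) (hT : 0 ≤ T) (t : ℝ) :
    ∃ q ∈ Set.Icc (0:ℝ) T, stepApprox P T B t = B q := by
  unfold stepApprox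
  split_ifs with h
  · exact ⟨T, ⟨hT, le_rfl⟩, rfl⟩
  · exact ⟨_, nextPt_mem_Icc hP hT _, rfl⟩

lemma stepStopApprox_eq_B (hP : ↑P ⊆ Set.Icc (0:ℝ) T) (hT : 0 ≤ T) {s : ℝ} (hs : s ∈ P)
    (t : ℝ) : ∃ q ∈ Set.Icc (0:ℝ) T, stepStopApprox P T B s t = B q := by
  unfold stepStopApprox
  split_ifs with h
  · exact stepApprox_eq_B hP hT t
  · exact ⟨s, hP (Finset.mem_coe.2 hs), rfl⟩

lemma stepStop_right (hP : ↑P ⊆ Set.Icc (0:ℝ) T) (hTm : T ∈ P) {s : ℝ} (hs : s ∈ P) (t : ℝ) :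
    ∃ b, t < b ∧ ∀ u, t ≤ u → u < b →
      stepStopApprox P T B s u = stepStopApprox P T B s t := by
  by_cases hts : t < s
  · have hsT : s ≤ T := (hP (Finset.mem_coe.2 hs)).2
    have hne : ((insert s P).filter (fun v => t < v)).Nonempty :=
      ⟨s, Finset.mem_filter.2 ⟨Finset.mem_insert_self _ _, hts⟩⟩
    set b := ((insert s P).filter (fun v => t < v)).min' hne with hb
    have htb : t < b := (Finset.mem_filter.1 (Finset.min'_mem _ hne)).2
    have hbs : b ≤ s := Finset.min'_le _ _ (Finset.mem_filter.2 ⟨Finset.mem_insert_self _ _, hts⟩)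
    refine ⟨b, htb, fun u htu hub => ?_⟩
    have hus : u < s := lt_of_lt_of_le hub hbs
    have huT : u < T ∨ u < s := Or.inr hus
    have key : P.filter (fun p => p ≤ u) = P.filter (fun p => p ≤ t) := by
      ext p
      simp only [Finset.mem_filter, and_congr_right_iff]
      intro hp
      constructor
      · intro hpu
        by_contra hpt
        push_neg at hpt
        have : b ≤ p := Finset.min'_le _ _
          (Finset.mem_filter.2 ⟨Finset.mem_insert_of_mem hp, hpt⟩)
        exact absurd hpu (not_le.2 (lt_of_lt_of_le hub this))
      · intro hpt
        exact hpt.trans htu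
    have huneT : u ≠ T := ne_of_lt (lt_of_lt_of_le hus hsT)
    have htneT : t ≠ T := ne_of_lt (lt_of_lt_of_le hts hsT)
    unfold stepStopApprox stepApprox prevPt
    rw [if_pos hus, if_pos hts, if_neg huneT, if_neg htneT, key]
  · push_neg at hts
    refine ⟨t + 1, by linarith, fun u htu _ => ?_⟩
    unfold stepStopApprox
    rw [if_neg (not_lt.2 (hts.trans htu)), if_neg (not_lt.2 hts)]

lemma stepStop_left (hP : ↑P ⊆ Set.Icc (0:ℝ) T) {s : ℝ} (hs : s ∈ P) (t : ℝ) :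
    ∃ a, a < t ∧ ∀ u v, a < u → u < t → a < v → v < t →
      stepStopApprox P T B s u = stepStopApprox P T B s v := by
  by_cases hst : s < t
  · refine ⟨max s (t - 1), max_lt hst (by linarith), fun u v hau hut hav hvt => ?_⟩
    have hsu : s ≤ u := (le_max_left s (t-1)).trans hau.le
    have hsv : s ≤ v := (le_max_left s (t-1)).trans hav.le
    unfold stepStopApprox
    rw [if_neg (not_lt.2 hsu), if_neg (not_lt.2 hsv)]
  · push_neg at hst
    have hsT : s ≤ T := (hP (Finset.mem_coe.2 hs)).2
    have htT : t ≤ T := hst.trans hsT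
    set Fl := P.filter (fun p => p < t) with hFl
    set a := if h : Fl.Nonempty then Fl.max' h else t - 1 with ha
    have hat : a < t := by
      rw [ha]
      split_ifs with h
      · exact (Finset.mem_filter.1 (Finset.max'_mem _ h)).2
      · linarith
    have hkey : ∀ p ∈ P, p < t → p ≤ a := by
      intro p hp hpt
      rw [ha]
      split_ifs with h
      · apply Finset.le_max'
        exact Finset.mem_filter.2 ⟨hp, hpt⟩
      · exact absurd ⟨p, Finset.mem_filter.2 ⟨hp, hpt⟩⟩ h
    have hfe : ∀ u, a < u → u < t → P.filter (fun p => p ≤ u) = Fl := by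
      intro u hau hut
      rw [hFl]
      ext p
      simp only [Finset.mem_filter, and_congr_right_iff]
      intro hp
      constructor
      · intro hpu
        exact lt_of_le_of_lt hpu hut
      · intro hpt
        exact (hkey p hp hpt).trans hau.le
    refine ⟨a, hat, fun u v hau hut hav hvt => ?_⟩
    have hus : u < s := lt_of_lt_of_le hut hst
    have hvs : v < s := lt_of_lt_of_le hvt hst
    have huT : u ≠ T := ne_of_lt (lt_of_lt_of_le hus hsT)
    have hvT : v ≠ T := ne_of_lt (lt_of_lt_of_le hvs hsT)
    unfold stepStopApprox stepApprox prevPt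
    rw [if_pos hus, if_pos hvs, if_neg huT, if_neg hvT, hfe u hau hut, hfe v hav hvt]

lemma isCadlag_mono {K U : Set (Fin d → ℝ)} {X : FPath d} (h : IsCadlag T K X)
    (hKU : K ⊆ U) : IsCadlag T U X :=
  ⟨fun t ht => hKU (h.1 t ht), h.2.1, fun t ht =>
    let ⟨L, hL, hten⟩ := h.2.2 t ht; ⟨L, hKU hL, hten⟩⟩

lemma isCadlag_stepStop (hP : ↑P ⊆ Set.Icc (0:ℝ) T) (hTm : T ∈ P) (hT : 0 ≤ T)
    {K : Set (Fin d → ℝ)} (hK : ∀ q ∈ Set.Icc (0:ℝ) T, B q ∈ K) {s : ℝ} (hs : s ∈ P) :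
    IsCadlag T K (stepStopApprox P T B s) := by
  refine ⟨fun t _ => ?_, fun t ht => ?_, fun t ht => ?_⟩
  · obtain ⟨q, hq, he⟩ := stepStopApprox_eq_B hP hT hs t
    rw [he]; exact hK q hq
  · obtain ⟨b, hb, hconst⟩ := stepStop_right hP hTm hs t
    have hev : stepStopApprox P T B s =ᶠ[nhdsWithin t (Set.Ioi t)]
        (fun _ => stepStopApprox P T B s t) :=
      eventually_of_mem (Ioo_mem_nhdsGT_of_mem ⟨le_rfl, hb⟩)
        (fun u hu => hconst u hu.1.le hu.2)
    exact tendsto_const_nhds.congr' hev.symm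
  · obtain ⟨a, ha, hconst⟩ := stepStop_left hP hs t
    have hc : a < (a + t) / 2 ∧ (a + t) / 2 < t := ⟨by linarith, by linarith⟩
    obtain ⟨q, hq, he⟩ := stepStopApprox_eq_B hP hT hs ((a + t) / 2)
    refine ⟨stepStopApprox P T B s ((a + t) / 2), by rw [he]; exact hK q hq, ?_⟩
    have hev : stepStopApprox P T B s =ᶠ[nhdsWithin t (Set.Iio t)]
        (fun _ => stepStopApprox P T B s ((a + t) / 2)) :=
      eventually_of_mem (Ioo_mem_nhdsLT_of_mem ⟨ha, le_rfl⟩)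
        (fun u hu => hconst u _ hu.1 hu.2 hc.1 hc.2)
    exact tendsto_const_nhds.congr' hev.symm

lemma isCadlag_of_continuousOn (hT : 0 < T) {K : Set (Fin d → ℝ)}
    (hval : ∀ t ∈ Set.Icc (0:ℝ) T, B t ∈ K) (hcont : ContinuousOn B (Set.Icc 0 T)) :
    IsCadlag T K B := by
  refine ⟨hval, fun t ht => ?_, fun t ht => ⟨B t, hval t ⟨ht.1.le, ht.2⟩, ?_⟩⟩
  · have h1 : ContinuousWithinAt B (Set.Ioc t T) t :=
      (hcont t ⟨ht.1, ht.2.le⟩).mono (Set.Ioc_subset_Icc_self.trans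
        (Set.Icc_subset_Icc_left ht.1))
    rw [ContinuousWithinAt, nhdsWithin_Ioc_eq_nhdsGT ht.2] at h1
    exact h1
  · have h1 : ContinuousWithinAt B (Set.Ico 0 t) t :=
      (hcont t ⟨ht.1.le, ht.2⟩).mono (Set.Ico_subset_Icc_self.trans
        (Set.Icc_subset_Icc_right ht.2))
    rw [ContinuousWithinAt, nhdsWithin_Ico_eq_nhdsLT ht.1] at h1
    exact h1


lemma exists_stieltjes_decomp {T : ℝ} (hT : 0 ≤ T) (f : ℝ → ℝ)
    (hf : ContinuousOn f (Set.Icc 0 T)) (hbv : BoundedVariationOn f (Set.Icc 0 T)) :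
    ∃ P N : StieltjesFunction ℝ, ∀ r ∈ Set.Icc (0:ℝ) T, f r = P r - N r := by
  obtain ⟨p, q, hp, hq, hpq⟩ :=
    hbv.locallyBoundedVariationOn.exists_monotoneOn_sub_monotoneOn
  set cl : ℝ → ℝ := fun r => max 0 (min r T) with hcl
  have hclmem : ∀ r, cl r ∈ Set.Icc (0:ℝ) T :=
    fun r => ⟨le_max_left _ _, max_le hT (min_le_right _ _)⟩
  have hclmono : Monotone cl := fun x y hxy => max_le_max le_rfl (min_le_min hxy le_rfl)
  have hclid : ∀ r ∈ Set.Icc (0:ℝ) T, cl r = r := by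
    intro r hr
    rw [hcl]
    simp only
    rw [min_eq_left hr.2, max_eq_right hr.1]
  have hclcont : Continuous cl := continuous_const.max (continuous_id.min continuous_const)
  have hpm : Monotone (p ∘ cl) := fun x y h => hp (hclmem x) (hclmem y) (hclmono h)
  have hqm : Monotone (q ∘ cl) := fun x y h => hq (hclmem x) (hclmem y) (hclmono h)
  refine ⟨hpm.stieltjesFunction, hqm.stieltjesFunction, fun r hr => ?_⟩
  have h1 : Tendsto (p ∘ cl) (nhdsWithin r (Set.Ioi r)) (nhds (hpm.stieltjesFunction r)) := by
    rw [Monotone.stieltjesFunction_eq]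
    exact hpm.tendsto_rightLim r
  have h2 : Tendsto (q ∘ cl) (nhdsWithin r (Set.Ioi r)) (nhds (hqm.stieltjesFunction r)) := by
    rw [Monotone.stieltjesFunction_eq]
    exact hqm.tendsto_rightLim r
  have h5 : ∀ x, (p ∘ cl) x - (q ∘ cl) x = f (cl x) := by
    intro x
    rw [hpq]
    simp [Pi.sub_apply]
  have h3 : Tendsto (fun x => f (cl x)) (nhdsWithin r (Set.Ioi r))
      (nhds (hpm.stieltjesFunction r - hqm.stieltjesFunction r)) :=
    (h1.sub h2).congr h5
  have h4 : Tendsto (fun x => f (cl x)) (nhdsWithin r (Set.Ioi r)) (nhds (f r)) := by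
    have h4' : Tendsto (fun x => f (cl x)) (nhds r) (nhds (f (cl r))) :=
      (hf.comp_continuous hclcont hclmem).tendsto r
    rw [hclid r hr] at h4'
    exact h4'.mono_left nhdsWithin_le_nhds
  exact (tendsto_nhds_unique h3 h4).symm

lemma step_eval {T : ℝ} {P : Finset ℝ} (h0 : (0:ℝ) ∈ P)
    (c : ℝ → ℝ) {r : ℝ} (hr : r ∈ Set.Ioc (0:ℝ) T) :
    ∃ s ∈ P, s < r ∧ r ≤ nextPt P T s ∧
      (∑ s ∈ P, (Set.Ioc s (nextPt P T s)).indicator (fun _ => c s) r) = c s := by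
  have hne : (P.filter (fun v => v < r)).Nonempty := ⟨0, Finset.mem_filter.2 ⟨h0, hr.1⟩⟩
  set s := (P.filter (fun v => v < r)).max' hne with hsdef
  have hsmem' := Finset.mem_filter.1 (Finset.max'_mem _ hne)
  have hsmem : s ∈ P := hsmem'.1
  have hsr : s < r := hsmem'.2
  have hrn : r ≤ nextPt P T s := by
    unfold nextPt
    split_ifs with h
    · have hm := Finset.mem_filter.1 (Finset.min'_mem _ h)
      by_contra hc
      push_neg at hc
      have hle : (P.filter (fun v => s < v)).min' h ≤ s := by
        apply Finset.le_max'
        exact Finset.mem_filter.2 ⟨hm.1, hc⟩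
      exact absurd hle (not_le.2 hm.2)
    · exact hr.2
  refine ⟨s, hsmem, hsr, hrn, ?_⟩
  rw [Finset.sum_eq_single_of_mem s hsmem]
  · apply Set.indicator_of_mem
    exact ⟨hsr, hrn⟩
  · intro s₂ h2 hne2
    apply Set.indicator_of_notMem
    rintro ⟨h2r, hrn2⟩
    have hle : s₂ ≤ s := by
      apply Finset.le_max'
      exact Finset.mem_filter.2 ⟨h2, h2r⟩
    have hlt : s₂ < s := lt_of_le_of_ne hle hne2
    have : nextPt P T s₂ ≤ s := nextPt_le hsmem hlt
    linarith

lemma step_eval_zero {T : ℝ} {P : Finset ℝ} (hP : ↑P ⊆ Set.Icc (0:ℝ) T) (hT : 0 ≤ T)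
    (c : ℝ → ℝ) {r : ℝ} (hr : r ∉ Set.Ioc (0:ℝ) T) :
    (∑ s ∈ P, (Set.Ioc s (nextPt P T s)).indicator (fun _ => c s) r) = 0 := by
  refine Finset.sum_eq_zero fun s hs => ?_
  apply Set.indicator_of_notMem
  rintro ⟨h1, h2⟩
  exact hr ⟨lt_of_le_of_lt (hP (Finset.mem_coe.2 hs)).1 h1,
    h2.trans (nextPt_mem_Icc hP hT s).2⟩

lemma step_integral (φ : StieltjesFunction ℝ) {T : ℝ} (P : Finset ℝ)
    (hP : ↑P ⊆ Set.Icc (0:ℝ) T) (hT : 0 ≤ T) (c : ℝ → ℝ) :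
    ∫ r in Set.Ioc (0:ℝ) T,
        (∑ s ∈ P, (Set.Ioc s (nextPt P T s)).indicator (fun _ => c s) r) ∂φ.measure
      = ∑ s ∈ P, c s * (φ (nextPt P T s) - φ s) := by
  have hint : ∀ s ∈ P, Integrable
      ((Set.Ioc s (nextPt P T s)).indicator (fun _ => c s))
      (φ.measure.restrict (Set.Ioc 0 T)) := by
    intro s _
    rw [integrable_indicator_iff measurableSet_Ioc]
    refine (integrableOn_const_iff enorm_ne_top).2 (Or.inr ?_)
    refine lt_of_le_of_lt (Measure.restrict_apply_le _ _) ?_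
    rw [StieltjesFunction.measure_Ioc]
    exact ENNReal.ofReal_lt_top
  rw [integral_finset_sum P hint]
  refine Finset.sum_congr rfl fun s hs => ?_
  have hsub : Set.Ioc s (nextPt P T s) ⊆ Set.Ioc (0:ℝ) T :=
    Set.Ioc_subset_Ioc (hP (Finset.mem_coe.2 hs)).1 (nextPt_mem_Icc hP hT s).2
  rw [integral_indicator measurableSet_Ioc, Measure.restrict_restrict measurableSet_Ioc,
    Set.inter_eq_self_of_subset_left hsub, setIntegral_const, smul_eq_mul,
    measureReal_def, StieltjesFunction.measure_Ioc,
    ENNReal.toReal_ofReal (sub_nonneg.2 (φ.mono (le_nextPt (hP (Finset.mem_coe.2 hs)).2))),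
    mul_comm]

lemma dct_aux {T : ℝ} (μ : Measure ℝ) (hfin : μ (Set.Ioc (0:ℝ) T) ≠ ⊤)
    (G : ℕ → ℝ → ℝ) (g : ℝ → ℝ) (C : ℝ)
    (hGm : ∀ n, Measurable (G n)) (hGb : ∀ n r, |G n r| ≤ C)
    (hconv : ∀ r ∈ Set.Ioc (0:ℝ) T, Tendsto (fun n => G n r) atTop (nhds (g r))) :
    IntegrableOn g (Set.Ioc 0 T) μ ∧
      Tendsto (fun n => ∫ r in Set.Ioc (0:ℝ) T, G n r ∂μ) atTop
        (nhds (∫ r in Set.Ioc (0:ℝ) T, g r ∂μ)) := by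
  set μ' := μ.restrict (Set.Ioc (0:ℝ) T) with hμ'
  haveI : IsFiniteMeasure μ' := by
    constructor
    rw [hμ', Measure.restrict_apply_univ]
    exact lt_top_iff_ne_top.2 hfin
  have hae : ∀ᵐ r ∂μ', r ∈ Set.Ioc (0:ℝ) T := ae_restrict_mem measurableSet_Ioc
  have hconv' : ∀ᵐ r ∂μ', Tendsto (fun n => G n r) atTop (nhds (g r)) :=
    hae.mono hconv
  have hgm : AEStronglyMeasurable g μ' :=
    aestronglyMeasurable_of_tendsto_ae atTop (fun n => (hGm n).aestronglyMeasurable) hconv'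
  have hbound : Integrable (fun _ : ℝ => C) μ' := integrable_const C
  have hGbd : ∀ n, ∀ᵐ r ∂μ', ‖G n r‖ ≤ C :=
    fun n => Filter.Eventually.of_forall fun r => by rw [Real.norm_eq_abs]; exact hGb n r
  constructor
  · refine Integrable.mono' hbound hgm ?_
    refine hconv'.mono fun r hr => ?_
    rw [Real.norm_eq_abs]
    exact le_of_tendsto' (hr.abs) fun n => hGb n r
  · exact tendsto_integral_of_dominated_convergence (fun _ => C)
      (fun n => (hGm n).aestronglyMeasurable) hbound hGbd hconv'

end ItoAux

end AuxLemmas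

/-- **Lemma (Itô integral along a continuous bounded-variation path)**: for an admissible
functional integrand `ξ` and `B ∈ CBV([0,T],U)`, the pathwise Itô integral
`∫_0^T ξ(s,B) dB(s)` exists and equals the Lebesgue–Stieltjes integral of `s ↦ ξ(s,B)`
with respect to `dB(s)`. -/
theorem ito_integral_eq_stieltjes_on_CBV
    {d : ℕ} {T : ℝ} (hT : 0 < T) (R : RefiningSeq T)
    {U : Set (Fin d → ℝ)} (hU : IsOpen U)
    (ξ : ℝ → FPath d → Fin d → ℝ) (hξ : AdmissibleIntegrand T U ξ)
    (B : FPath d) (hB : IsCBV T U B) :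
    ∃ (I : ℝ) (J : Fin d → ℝ),
      IsItoIntegral R ξ B T I ∧
      (∀ i, IsLSIntegral (fun s => ξ s B i) (fun s => B s i) 0 T (J i)) ∧
      I = ∑ i, J i := by
  classical
  obtain ⟨m, S, A, F, hS, hA, hF, hξeq⟩ := hξ
  obtain ⟨hb, _, _⟩ := hF
  set K : Set (Fin d → ℝ) := B '' Set.Icc 0 T with hK
  have hKU : K ⊆ U := by
    rintro _ ⟨t, ht, rfl⟩
    exact hB.1 t ht
  have hKc : IsCompact K := isCompact_Icc.image_of_continuousOn hB.2.1
  have hBK : ∀ t ∈ Set.Icc (0:ℝ) T, B t ∈ K := fun t ht => Set.mem_image_of_mem B ht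
  have hBcadK : IsCadlag T K B := ItoAux.isCadlag_of_continuousOn hT hBK hB.2.1
  have hBcadU : IsCadlag T U B := ItoAux.isCadlag_mono hBcadK hKU
  choose C hC using fun i => hb.vd_bdd i A hA K hKU hKc
  have hC0 : ∀ i, 0 ≤ C i :=
    fun i => (abs_nonneg _).trans (hC i 0 ⟨le_rfl, hT.le⟩ B hBcadK)
  choose Ps Ns hPN using fun i : Fin d =>
    ItoAux.exists_stieltjes_decomp hT.le (fun t => B t i)
      ((continuous_apply i).comp_continuousOn hB.2.1) (hB.2.2 i)
  -- step approximants of the integrand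
  set G : Fin d → ℕ → ℝ → ℝ := fun i n r =>
    ∑ s ∈ R.part n, (Set.Ioc s (nextPt (R.part n) T s)).indicator
      (fun _ => ξ s (stepStopApprox (R.part n) T B s) i) r with hG
  have hYcadK : ∀ n, ∀ s ∈ R.part n, IsCadlag T K (stepStopApprox (R.part n) T B s) :=
    fun n s hs => ItoAux.isCadlag_stepStop (R.subset_Icc n) (R.endpoint_mem n) hT.le hBK hs
  have hYcadU : ∀ n, ∀ s ∈ R.part n, IsCadlag T U (stepStopApprox (R.part n) T B s) :=
    fun n s hs => ItoAux.isCadlag_mono (hYcadK n s hs) hKU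
  -- uniform bound
  have hGb : ∀ i n r, |G i n r| ≤ C i := by
    intro i n r
    by_cases hr : r ∈ Set.Ioc (0:ℝ) T
    · obtain ⟨s, hsmem, hsr, hrn, heq⟩ := ItoAux.step_eval (R.zero_mem n)
        (fun s' => ξ s' (stepStopApprox (R.part n) T B s') i) hr
      have hsI : s ∈ Set.Icc (0:ℝ) T := R.subset_Icc n (Finset.mem_coe.2 hsmem)
      have heq' : G i n r = ξ s (stepStopApprox (R.part n) T B s) i := heq
      rw [heq', congrFun (hξeq s hsI _ (hYcadU n s hsmem)) i]
      exact hC i s hsI _ (hYcadK n s hsmem)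
    · have heq' : G i n r = 0 :=
        ItoAux.step_eval_zero (R.subset_Icc n) hT.le
          (fun s' => ξ s' (stepStopApprox (R.part n) T B s') i) hr
      rw [heq', abs_zero]
      exact hC0 i
  have hGm : ∀ i n, Measurable (G i n) :=
    fun i n => Finset.measurable_sum _ fun s _ =>
      measurable_const.indicator measurableSet_Ioc
  -- pointwise convergence
  have hconv : ∀ (i : Fin d), ∀ r ∈ Set.Ioc (0:ℝ) T,
      Tendsto (fun n => G i n r) atTop (nhds (ξ r B i)) := by
    intro i r hr
    rw [Metric.tendsto_atTop]
    intro ε hε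
    obtain ⟨η, hη, hprop⟩ := hb.vd_leftCont i r hr ε hε B hBcadU A hA
    have huc := (isCompact_Icc.uniformContinuousOn_of_continuous hB.2.1)
    rw [Metric.uniformContinuousOn_iff] at huc
    obtain ⟨δ, hδ, hucp⟩ := huc (η/2) (half_pos hη)
    obtain ⟨N, hN⟩ := R.mesh_to_zero (min δ η) (lt_min hδ hη)
    refine ⟨N, fun n hn => ?_⟩
    obtain ⟨s, hsmem, hsr, hrn, heq⟩ := ItoAux.step_eval (R.zero_mem n)
      (fun s' => ξ s' (stepStopApprox (R.part n) T B s') i) hr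
    have hsI : s ∈ Set.Icc (0:ℝ) T := R.subset_Icc n (Finset.mem_coe.2 hsmem)
    have hmesh : nextPt (R.part n) T s - s < min δ η := hN n hn s hsmem
    have hrs : r - s < min δ η := lt_of_le_of_lt (by linarith) hmesh
    set Y := stepStopApprox (R.part n) T B s with hY
    have hYU : IsCadlag T U Y := hYcadU n s hsmem
    -- sup-distance estimate
    have hsd : supDist T (stopped B r) (stopped Y s) < η := by
      have hle : supDist T (stopped B r) (stopped Y s) ≤ η/2 := by
        apply Real.iSup_le _ (by linarith)
        rintro ⟨u, hu⟩
        show ‖stopped B r u - stopped Y s u‖ ≤ η/2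
        unfold stopped
        by_cases hus : u < s
        · have h1 : min s u = u := min_eq_right hus.le
          have h2 : min r u = u := min_eq_right (hus.le.trans hsr.le)
          have huT' : u < T := lt_of_lt_of_le hus hsI.2
          have hYu : Y u = stepApprox (R.part n) T B u := by
            rw [hY]; unfold stepStopApprox; rw [if_pos hus]
          have hstep : stepApprox (R.part n) T B u
              = B (nextPt (R.part n) T (prevPt (R.part n) u)) := by
            unfold stepApprox; rw [if_neg (ne_of_lt huT')]
          have hpm := ItoAux.prevPt_mem (R.zero_mem n) hu.1
          have hq : nextPt (R.part n) T (prevPt (R.part n) u) ∈ Set.Icc (0:ℝ) T :=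
            ItoAux.nextPt_mem_Icc (R.subset_Icc n) hT.le _
          have huq : u < nextPt (R.part n) T (prevPt (R.part n) u) :=
            ItoAux.lt_nextPt_prevPt huT'
          have hmesh2 := hN n hn _ hpm.1
          have hd : dist (B u) (B (nextPt (R.part n) T (prevPt (R.part n) u))) < η/2 := by
            refine hucp u hu _ hq ?_
            rw [Real.dist_eq, abs_sub_comm, abs_of_nonneg (by linarith)]
            have := hpm.2
            have hδ' : min δ η ≤ δ := min_le_left _ _
            linarith
          rw [h1, h2, hYu, hstep, ← dist_eq_norm]
          exact hd.le
        · push_neg at hus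
          have h1 : min s u = s := min_eq_left hus
          have hYs : Y s = B s := by
            rw [hY]; unfold stepStopApprox; rw [if_neg (lt_irrefl s)]
          have hv1 : s ≤ min r u := le_min hsr.le hus
          have hv2 : min r u ≤ r := min_le_left _ _
          have hvI : min r u ∈ Set.Icc (0:ℝ) T := ⟨hsI.1.trans hv1, hv2.trans hr.2⟩
          have hd : dist (B (min r u)) (B s) < η/2 := by
            refine hucp _ hvI s hsI ?_
            rw [Real.dist_eq, abs_of_nonneg (by linarith)]
            have hδ' : min δ η ≤ δ := min_le_left _ _
            linarith
          rw [h1, hYs, ← dist_eq_norm]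
          exact hd.le
      linarith
    have happ := hprop (r - s) ⟨by linarith, lt_of_lt_of_le hrs (min_le_right δ η)⟩ Y hYU
      (by rw [sub_sub_cancel]; exact hsd)
    rw [sub_sub_cancel] at happ
    have hGval : G i n r = vertD F s Y A i := by
      have heq' : G i n r = ξ s Y i := heq
      rw [heq', congrFun (hξeq s hsI Y hYU) i]
    have hgval : ξ r B i = vertD F r B A i :=
      congrFun (hξeq r ⟨hr.1.le, hr.2⟩ B hBcadU) i
    rw [Real.dist_eq, hGval, hgval, abs_sub_comm]
    exact happ
  -- dominated convergence for each coordinate and each Stieltjes measure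
  have hmainP : ∀ i : Fin d, IntegrableOn (fun r => ξ r B i) (Set.Ioc 0 T) (Ps i).measure ∧
      Tendsto (fun n => ∫ r in Set.Ioc (0:ℝ) T, G i n r ∂(Ps i).measure) atTop
        (nhds (∫ r in Set.Ioc (0:ℝ) T, ξ r B i ∂(Ps i).measure)) :=
    fun i => ItoAux.dct_aux (Ps i).measure
      (by rw [StieltjesFunction.measure_Ioc]; exact ENNReal.ofReal_ne_top)
      (G i) (fun r => ξ r B i) (C i) (hGm i) (hGb i) (hconv i)
  have hmainN : ∀ i : Fin d, IntegrableOn (fun r => ξ r B i) (Set.Ioc 0 T) (Ns i).measure ∧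
      Tendsto (fun n => ∫ r in Set.Ioc (0:ℝ) T, G i n r ∂(Ns i).measure) atTop
        (nhds (∫ r in Set.Ioc (0:ℝ) T, ξ r B i ∂(Ns i).measure)) :=
    fun i => ItoAux.dct_aux (Ns i).measure
      (by rw [StieltjesFunction.measure_Ioc]; exact ENNReal.ofReal_ne_top)
      (G i) (fun r => ξ r B i) (C i) (hGm i) (hGb i) (hconv i)
  set J : Fin d → ℝ := fun i =>
    (∫ r in Set.Ioc (0:ℝ) T, ξ r B i ∂(Ps i).measure)
      - (∫ r in Set.Ioc (0:ℝ) T, ξ r B i ∂(Ns i).measure) with hJ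
  refine ⟨∑ i, J i, J, ?_, ?_, rfl⟩
  · -- the Itô sums converge
    have hrw : ∀ n, itoSum (R.part n) T ξ B T =
        ∑ i, ((∫ r in Set.Ioc (0:ℝ) T, G i n r ∂(Ps i).measure)
          - (∫ r in Set.Ioc (0:ℝ) T, G i n r ∂(Ns i).measure)) := by
      intro n
      unfold itoSum
      rw [Finset.filter_true_of_mem (fun s hs => ((R.subset_Icc n) (Finset.mem_coe.2 hs)).2)]
      rw [Finset.sum_comm]
      refine Finset.sum_congr rfl fun i _ => ?_
      have e1 : (∫ r in Set.Ioc (0:ℝ) T, G i n r ∂(Ps i).measure)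
          = ∑ s ∈ R.part n, ξ s (stepStopApprox (R.part n) T B s) i
              * ((Ps i) (nextPt (R.part n) T s) - (Ps i) s) :=
        ItoAux.step_integral (Ps i) (R.part n) (R.subset_Icc n) hT.le _
      have e2 : (∫ r in Set.Ioc (0:ℝ) T, G i n r ∂(Ns i).measure)
          = ∑ s ∈ R.part n, ξ s (stepStopApprox (R.part n) T B s) i
              * ((Ns i) (nextPt (R.part n) T s) - (Ns i) s) :=
        ItoAux.step_integral (Ns i) (R.part n) (R.subset_Icc n) hT.le _
      rw [e1, e2, ← Finset.sum_sub_distrib]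
      refine Finset.sum_congr rfl fun s hs => ?_
      have hsI : s ∈ Set.Icc (0:ℝ) T := R.subset_Icc n (Finset.mem_coe.2 hs)
      have h1 : B (nextPt (R.part n) T s) i
          = (Ps i) (nextPt (R.part n) T s) - (Ns i) (nextPt (R.part n) T s) :=
        hPN i _ (ItoAux.nextPt_mem_Icc (R.subset_Icc n) hT.le s)
      have h2 : B s i = (Ps i) s - (Ns i) s := hPN i s hsI
      rw [h1, h2]
      ring
    unfold IsItoIntegral
    refine Tendsto.congr (fun n => (hrw n).symm) ?_
    exact tendsto_finset_sum _ fun i _ => ((hmainP i).2.sub ((hmainN i).2))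
  · -- the Lebesgue–Stieltjes integrals
    intro i
    refine ⟨Ps i, Ns i, fun r hr => hPN i r hr, ?_, ?_, ?_⟩
    · rw [intervalIntegrable_iff, Set.uIoc_of_le hT.le]
      exact (hmainP i).1
    · rw [intervalIntegrable_iff, Set.uIoc_of_le hT.le]
      exact (hmainN i).1
    · rw [hJ, intervalIntegral.integral_of_le hT.le, intervalIntegral.integral_of_le hT.le]
end

section
/- Càdlàg regularity in time: Let F∈ℂ^{1,2}_c(U,S). Then for all X∈D([0,T],U) and A∈CBV([0,T],S), the function t↦F(t,X,A) is càdlàg on [0,T], and its left-hand limit at every t∈(0,T] is given by lim_{s↑t} F(s,X,A) = F(t, X^{t−}, A), where X^{t−} denotes the path obtained as the limit of the stopped paths X^s as s↑t (i.e., X^{t−}(u)=X(u) for u<t and X^{t−}(u)=X(t−) for u≥t). -/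
open Filter Set MeasureTheory

section AuxLemmas

lemma stopped_stopped {d : ℕ} (X : FPath d) (t s : ℝ) (h : t ≤ s) :
    stopped (stopped X t) s = stopped X t := by
  funext u
  simp only [stopped]
  congr 1
  rcases le_total u s with h1 | h1
  · rw [min_eq_right h1]
  · rw [min_eq_left h1, min_eq_left (h.trans h1), min_eq_left h]

lemma isCadlag_stopped {d : ℕ} {T : ℝ} {U : Set (Fin d → ℝ)} {X : FPath d}
    (hX : IsCadlag T U X) {s : ℝ} (hs : s ∈ Set.Icc (0:ℝ) T) :
    IsCadlag T U (stopped X s) := by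
  refine ⟨fun u hu => hX.1 _ ⟨le_min hs.1 hu.1, (min_le_left _ _).trans hs.2⟩, ?_, ?_⟩
  · intro u hu
    by_cases h : u < s
    · have h0 : stopped X s u = X u := by simp [stopped, min_eq_right h.le]
      rw [h0]
      refine (hX.2.1 u hu).congr' ?_
      filter_upwards [mem_nhdsWithin_of_mem_nhds (isOpen_Iio.mem_nhds h)] with v hv
      simp [stopped, min_eq_right (le_of_lt (Set.mem_Iio.1 hv))]
    · push_neg at h
      have h0 : stopped X s u = X s := by simp [stopped, min_eq_left h]
      rw [h0]
      refine tendsto_const_nhds.congr' ?_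
      filter_upwards [self_mem_nhdsWithin] with v hv
      simp [stopped, min_eq_left (h.trans (le_of_lt (Set.mem_Ioi.1 hv)))]
  · intro u hu
    by_cases h : u ≤ s
    · obtain ⟨L, hLU, hL⟩ := hX.2.2 u hu
      refine ⟨L, hLU, hL.congr' ?_⟩
      filter_upwards [self_mem_nhdsWithin] with v hv
      simp [stopped, min_eq_right ((le_of_lt (Set.mem_Iio.1 hv)).trans h)]
    · push_neg at h
      refine ⟨X s, hX.1 s hs, tendsto_const_nhds.congr' ?_⟩
      filter_upwards [mem_nhdsWithin_of_mem_nhds (isOpen_Ioi.mem_nhds h)] with v hv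
      simp [stopped, min_eq_left (le_of_lt (Set.mem_Ioi.1 hv))]

lemma supDist_le {d : ℕ} {T : ℝ} {X Y : FPath d} {c : ℝ} (hc : 0 ≤ c)
    (h : ∀ u ∈ Set.Icc (0:ℝ) T, ‖X u - Y u‖ ≤ c) : supDist T X Y ≤ c :=
  Real.iSup_le (fun u => h u.1 u.2) hc

/-- Uniqueness of the Lebesgue–Stieltjes integral value under different Jordan decompositions. -/
lemma stieltjes_integral_unique (g : ℝ → ℝ) (a b : ℝ) (hab : a ≤ b)
    (P N P' N' : StieltjesFunction ℝ)
    (h : ∀ r ∈ Set.Icc a b, P r - N r = P' r - N' r)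
    (hP : IntervalIntegrable g P.measure a b) (hN : IntervalIntegrable g N.measure a b)
    (hP' : IntervalIntegrable g P'.measure a b) (hN' : IntervalIntegrable g N'.measure a b) :
    (∫ r in a..b, g r ∂P.measure) - ∫ r in a..b, g r ∂N.measure
      = (∫ r in a..b, g r ∂P'.measure) - ∫ r in a..b, g r ∂N'.measure := by
  have key : ∀ (Q R Q' R' : StieltjesFunction ℝ),
      (∀ r ∈ Set.Icc a b, Q r + R' r = Q' r + R r) →
      (Q.measure + R'.measure).restrict (Set.Ioc a b)
        = (Q'.measure + R.measure).restrict (Set.Ioc a b) := by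
    intro Q R Q' R' hsum
    refine Measure.ext_of_Ioc' _ _ (fun c e hce => ?_) (fun c e hce => ?_)
    · rw [Measure.restrict_apply measurableSet_Ioc]
      refine ((measure_mono Set.inter_subset_left).trans_lt ?_).ne
      rw [Measure.add_apply, Q.measure_Ioc, R'.measure_Ioc]
      exact ENNReal.add_lt_top.2 ⟨ENNReal.ofReal_lt_top, ENNReal.ofReal_lt_top⟩
    · rw [Measure.restrict_apply measurableSet_Ioc, Measure.restrict_apply measurableSet_Ioc,
        Set.Ioc_inter_Ioc]
      set x := c ⊔ a
      set y := e ⊓ b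
      rcases lt_or_ge x y with hxy | hxy
      · have hx : x ∈ Set.Icc a b := ⟨le_sup_right, (hxy.le.trans (inf_le_right))⟩
        have hy : y ∈ Set.Icc a b := ⟨le_sup_right.trans hxy.le, inf_le_right⟩
        rw [Measure.add_apply, Measure.add_apply, Q.measure_Ioc, R.measure_Ioc,
          Q'.measure_Ioc, R'.measure_Ioc,
          ← ENNReal.ofReal_add (sub_nonneg.2 (Q.mono hxy.le)) (sub_nonneg.2 (R'.mono hxy.le)),
          ← ENNReal.ofReal_add (sub_nonneg.2 (Q'.mono hxy.le)) (sub_nonneg.2 (R.mono hxy.le))]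
        have h1 := hsum x hx
        have h2 := hsum y hy
        congr 1
        linarith
      · rw [Set.Ioc_eq_empty (not_lt.2 hxy), measure_empty, measure_empty]
  have hmeq := key P N P' N' (fun r hr => by have := h r hr; linarith)
  have e1 : ∀ (μ : Measure ℝ), IntervalIntegrable g μ a b →
      ∫ r in a..b, g r ∂μ = ∫ r, g r ∂(μ.restrict (Set.Ioc a b)) := by
    intro μ _
    rw [intervalIntegral.integral_of_le hab]
  rw [e1 _ hP, e1 _ hN, e1 _ hP', e1 _ hN']
  have i1 : Integrable g (P.measure.restrict (Set.Ioc a b)) := hP.1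
  have i2 : Integrable g (N.measure.restrict (Set.Ioc a b)) := hN.1
  have i3 : Integrable g (P'.measure.restrict (Set.Ioc a b)) := hP'.1
  have i4 : Integrable g (N'.measure.restrict (Set.Ioc a b)) := hN'.1
  have e2 : (∫ r, g r ∂(P.measure.restrict (Set.Ioc a b)))
      + ∫ r, g r ∂(N'.measure.restrict (Set.Ioc a b))
      = (∫ r, g r ∂(P'.measure.restrict (Set.Ioc a b)))
      + ∫ r, g r ∂(N.measure.restrict (Set.Ioc a b)) := by
    rw [← integral_add_measure i1 i4, ← integral_add_measure i3 i2,
      ← Measure.restrict_add, ← Measure.restrict_add, hmeq]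
  linarith

/-- The integral of `|g|` over `Ioc a s` tends to `0` as `s ↓ a`. -/
lemma tendsto_setIntegral_Ioc_zero (μ : Measure ℝ) (g : ℝ → ℝ) (a b : ℝ) (hab : a < b)
    (hg : IntegrableOn g (Set.Ioc a b) μ) :
    Tendsto (fun s => ∫ r in Set.Ioc a s, |g r| ∂μ) (nhdsWithin a (Set.Ioi a)) (nhds 0) := by
  have hg' : IntegrableOn (fun r => |g r|) (Set.Ioc a b) μ := hg.abs
  -- a sequence decreasing to a
  set u : ℕ → ℝ := fun n => a + (b - a) / (n + 1) with hu
  have hua : ∀ n, a < u n := fun n => by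
    have : (0:ℝ) < (b - a) / (n + 1) := div_pos (by linarith) (by positivity)
    simp [hu]; linarith
  have hub : ∀ n, u n ≤ b := fun n => by
    have h1 : (b - a) / ((n:ℝ) + 1) ≤ (b - a) / 1 :=
      div_le_div_of_nonneg_left (by linarith) one_pos (by norm_num)
    simp only [hu]; linarith [h1]
  have hulim : Tendsto u atTop (nhds a) := by
    have : Tendsto (fun n : ℕ => (b - a) / (n + 1)) atTop (nhds 0) := by
      apply Tendsto.div_atTop tendsto_const_nhds
      exact tendsto_atTop_add_const_right _ 1 tendsto_natCast_atTop_atTop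
    simpa using tendsto_const_nhds.add this
  -- dominated convergence along u
  have hseq : Tendsto (fun n => ∫ r in Set.Ioc a (u n), |g r| ∂μ) atTop (nhds 0) := by
    have heq : ∀ n, ∫ r in Set.Ioc a (u n), |g r| ∂μ
        = ∫ r in Set.Ioc a b, (Set.Ioc a (u n)).indicator (fun r => |g r|) r ∂μ := by
      intro n
      rw [setIntegral_indicator measurableSet_Ioc,
        Set.inter_eq_right.2 (Set.Ioc_subset_Ioc_right (hub n))]
    simp only [heq]
    have : Tendsto (fun n => ∫ r in Set.Ioc a b,
        (Set.Ioc a (u n)).indicator (fun r => |g r|) r ∂μ) atTop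
        (nhds (∫ r in Set.Ioc a b, (0:ℝ) ∂μ)) := by
      apply tendsto_integral_of_dominated_convergence (fun r => |g r|)
      · exact fun n => hg'.aestronglyMeasurable.indicator measurableSet_Ioc
      · exact hg'
      · intro n
        filter_upwards with r
        by_cases hr : r ∈ Set.Ioc a (u n)
        · simp [hr, abs_abs, le_refl]
        · simp [hr, abs_nonneg]
      · filter_upwards with r
        rcases le_or_gt r a with hr | hr
        · refine tendsto_const_nhds.congr' ?_
          filter_upwards with n
          simp [Set.indicator_of_notMem (fun h : r ∈ Set.Ioc a (u n) => absurd h.1 (not_lt.2 hr))]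
        · refine tendsto_const_nhds.congr' ?_
          filter_upwards [hulim.eventually_lt_const hr] with n hn
          simp [Set.indicator_of_notMem (fun hmem : r ∈ Set.Ioc a (u n) =>
            absurd hmem.2 (not_le.2 hn))]
    simpa using this
  rw [Metric.tendsto_nhdsWithin_nhds]
  intro ε hε
  obtain ⟨n, hn⟩ := (hseq.eventually_lt_const hε).exists
  refine ⟨u n - a, by linarith [hua n], fun {x} hx hxd => ?_⟩
  have hxu : x ≤ u n := by
    rw [Real.dist_eq, abs_of_pos (by linarith [Set.mem_Ioi.1 hx] : (0:ℝ) < x - a)] at hxd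
    linarith
  have hsub : Set.Ioc a x ⊆ Set.Ioc a (u n) := Set.Ioc_subset_Ioc_right hxu
  have hmono : ∫ r in Set.Ioc a x, |g r| ∂μ ≤ ∫ r in Set.Ioc a (u n), |g r| ∂μ := by
    refine setIntegral_mono_set (hg'.mono_set (Set.Ioc_subset_Ioc_right (hub n)))
      (Filter.Eventually.of_forall fun r => abs_nonneg _) (HasSubset.Subset.eventuallyLE hsub)
  rw [Real.dist_eq, sub_zero, abs_of_nonneg (integral_nonneg fun r => abs_nonneg _)]
  exact lt_of_le_of_lt hmono hn


lemma na_self {d m : ℕ} {T : ℝ} {U : Set (Fin d → ℝ)} {S : Set (Fin m → ℝ)} {F : Fnl d m}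
    (hNA : NonAnticipative T U S F) {s : ℝ} {X : FPath d} {A : FPath m}
    (hs : s ∈ Set.Icc (0:ℝ) T) (hX : IsCadlag T U X) (hA : IsCBV T S A) :
    F s X A = F s (stopped X s) A := by
  rw [hNA s hs X hX A hA, hNA s hs (stopped X s) (isCadlag_stopped hX hs) A hA,
    stopped_stopped X s s le_rfl]

end AuxLemmas

/-- **Lemma 3.2 (b)**: for `F ∈ ℂ^{1,2}_c(U,S)`, `X ∈ D([0,T],U)` and `A ∈ CBV([0,T],S)`,
the function `t ↦ F(t,X,A)` is càdlàg, and its left-hand limit at `t ∈ (0,T]` is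
`F(t, X^{t−}, A)`, where `X^{t−}(u) = X(u)` for `u < t` and `X^{t−}(u) = X(t−)` for `u ≥ t`. -/
theorem cadlag_in_time
    {d m : ℕ} {T : ℝ} (hT : 0 < T)
    {U : Set (Fin d → ℝ)} (hU : IsOpen U) {S : Set (Fin m → ℝ)} (hS : IsOpen S)
    (F : Fnl d m) (hF : C12c T U S F)
    (X : FPath d) (hX : IsCadlag T U X) (A : FPath m) (hA : IsCBV T S A) :
    (∀ t ∈ Set.Ico (0:ℝ) T,
      Tendsto (fun s => F s X A) (nhdsWithin t (Set.Ioi t)) (nhds (F t X A))) ∧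
    (∀ t ∈ Set.Ioc (0:ℝ) T,
      Tendsto (fun s => F s X A) (nhdsWithin t (Set.Iio t))
        (nhds (F t (fun u => if u < t then X u else Function.leftLim X t) A))) := by
  constructor
  · -- right continuity
    intro t ht
    obtain ⟨ht0, htT⟩ := ht
    have htIcc : t ∈ Set.Icc (0:ℝ) T := ⟨ht0, htT.le⟩
    -- continuity part
    have key2 : Tendsto (fun s => F s (stopped X s) A - F s (stopped X t) A)
        (nhdsWithin t (Set.Ioi t)) (nhds 0) := by
      rw [Metric.tendsto_nhdsWithin_nhds]
      intro ε hε
      obtain ⟨η, hη, hcont⟩ := hF.2.1 ε hε t htIcc (stopped X t) (isCadlag_stopped hX htIcc) A hA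
      have hrc := hX.2.1 t ⟨ht0, htT⟩
      rw [Metric.tendsto_nhdsWithin_nhds] at hrc
      obtain ⟨δ₁, hδ₁, hrc⟩ := hrc (η/2) (by linarith)
      refine ⟨min δ₁ (min η (T - t)), lt_min hδ₁ (lt_min hη (by linarith)), fun {x} hx hxd => ?_⟩
      have hxt : t < x := Set.mem_Ioi.1 hx
      have hxd' : x - t < min δ₁ (min η (T - t)) := by
        rwa [Real.dist_eq, abs_of_pos (by linarith : (0:ℝ) < x - t)] at hxd
      have hd1 : x - t < δ₁ := lt_of_lt_of_le hxd' (min_le_left _ _)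
      have hd2 : x - t < η := lt_of_lt_of_le hxd' ((min_le_right _ _).trans (min_le_left _ _))
      have hd3 : x - t < T - t := lt_of_lt_of_le hxd' ((min_le_right _ _).trans (min_le_right _ _))
      have hxIcc : x ∈ Set.Icc (0:ℝ) T := ⟨ht0.trans hxt.le, by linarith⟩
      have hsup : supDist T (stopped X t) (stopped X x) < η := by
        refine lt_of_le_of_lt (supDist_le (by linarith : (0:ℝ) ≤ η/2) fun u hu => ?_)
          (by linarith : η/2 < η)
        rcases le_or_gt u t with h1 | h1
        · have e : stopped X t u = stopped X x u := by
            simp [stopped, min_eq_right h1, min_eq_right (h1.trans hxt.le)]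
          rw [e, sub_self, norm_zero]; linarith
        · have e : stopped X t u = X t := by simp [stopped, min_eq_left h1.le]
          have hmin : t < min x u := lt_min hxt h1
          have hd : dist (min x u) t < δ₁ := by
            rw [Real.dist_eq, abs_of_pos (by linarith : (0:ℝ) < min x u - t)]
            have : min x u ≤ x := min_le_left _ _
            linarith
          have := hrc (Set.mem_Ioi.2 hmin) hd
          rw [dist_eq_norm] at this
          rw [e]
          have e2 : stopped X x u = X (min x u) := rfl
          rw [e2, ← norm_neg]
          simp only [neg_sub]
          linarith
      have habs : |t - x| < η := by rw [abs_sub_comm, abs_of_pos (by linarith : (0:ℝ) < x - t)]; linarith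
      have hres := hcont x hxIcc (stopped X x) (isCadlag_stopped hX hxIcc) hsup habs
      rw [Real.dist_eq, sub_zero, abs_sub_comm]
      exact hres
    -- horizontal part
    obtain ⟨HD, hHD, _⟩ := hF.1.horiz
    obtain ⟨-, Ibig, hIbig, -⟩ := hHD.2.2 t T ht0 htT le_rfl X hX A hA
    choose P N hPN hiP hiN hval using hIbig
    have key : Tendsto (fun s => F s (stopped X t) A) (nhdsWithin t (Set.Ioi t))
        (nhds (F t (stopped X t) A)) := by
      rw [← tendsto_sub_nhds_zero_iff]
      apply squeeze_zero_norm' (a := fun s => ∑ i : Fin (m+1),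
        ((∫ r in Set.Ioc t s, |HD i r (stopped X t) A| ∂(P i).measure)
          + ∫ r in Set.Ioc t s, |HD i r (stopped X t) A| ∂(N i).measure))
      · filter_upwards [Ioc_mem_nhdsGT_of_mem ⟨le_refl t, htT⟩] with s hs
        obtain ⟨-, I, hI, hid⟩ := hHD.2.2 t s ht0 hs.1 hs.2 X hX A hA
        rw [Real.norm_eq_abs, hid]
        refine (Finset.abs_sum_le_sum_abs _ _).trans (Finset.sum_le_sum fun i _ => ?_)
        obtain ⟨P', N', hPN', hiP', hiN', hval'⟩ := hI i
        have hmem : s ∈ Set.uIcc t T := by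
          rw [Set.uIcc_of_le htT.le]; exact ⟨hs.1.le, hs.2⟩
        have hPi : IntervalIntegrable (fun r => HD i r (stopped X t) A) (P i).measure t s :=
          (hiP i).mono_set (Set.uIcc_subset_uIcc_left hmem)
        have hNi : IntervalIntegrable (fun r => HD i r (stopped X t) A) (N i).measure t s :=
          (hiN i).mono_set (Set.uIcc_subset_uIcc_left hmem)
        have huniq := stieltjes_integral_unique (fun r => HD i r (stopped X t) A) t s hs.1.le
          P' N' (P i) (N i)
          (fun r hr => by
            rw [← hPN' r hr, hPN i r (Set.Icc_subset_Icc_right hs.2 hr)])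
          hiP' hiN' hPi hNi
        rw [hval', huniq]
        have htri : ∀ p q : ℝ, |p - q| ≤ |p| + |q| := fun p q => by
          calc |p - q| = |p + (-q)| := by rw [sub_eq_add_neg]
          _ ≤ |p| + |(-q)| := abs_add_le _ _
          _ = |p| + |q| := by rw [abs_neg]
        refine (htri _ _).trans (add_le_add ?_ ?_)
        · refine (intervalIntegral.abs_integral_le_integral_abs hs.1.le).trans_eq ?_
          rw [intervalIntegral.integral_of_le hs.1.le]
        · refine (intervalIntegral.abs_integral_le_integral_abs hs.1.le).trans_eq ?_
          rw [intervalIntegral.integral_of_le hs.1.le]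
      · rw [show (0:ℝ) = ∑ _i : Fin (m+1), ((0:ℝ) + 0) by simp]
        refine tendsto_finset_sum _ fun i _ => Tendsto.add ?_ ?_
        · exact tendsto_setIntegral_Ioc_zero _ _ t T htT (hiP i).1
        · exact tendsto_setIntegral_Ioc_zero _ _ t T htT (hiN i).1
    have hNA := hF.1.nonanticip
    have hsum := key2.add key
    rw [zero_add] at hsum
    simp only [sub_add_cancel] at hsum
    have heq : (fun s => F s (stopped X s) A) =ᶠ[nhdsWithin t (Set.Ioi t)]
        (fun s => F s X A) := by
      filter_upwards [Ioc_mem_nhdsGT_of_mem ⟨le_refl t, htT⟩] with s hs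
      exact (na_self hNA ⟨ht0.trans hs.1.le, hs.2⟩ hX hA).symm
    have hfin := hsum.congr' heq
    rwa [← na_self hNA htIcc hX hA] at hfin
  · -- left limit
    intro t ht
    obtain ⟨ht0, htT⟩ := ht
    obtain ⟨L, hLU, hL⟩ := hX.2.2 t ⟨ht0, htT⟩
    have hLL : Function.leftLim X t = L :=
      leftLim_eq_of_tendsto (h := nhdsLT_neBot t) hL
    have hgoal : (fun u => if u < t then X u else Function.leftLim X t)
        = (fun u => if u < t then X u else L) := by rw [hLL]
    rw [hgoal]
    set Xm : FPath d := fun u => if u < t then X u else L with hXm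
    have hXmc : IsCadlag T U Xm := by
      refine ⟨?_, ?_, ?_⟩
      · intro u hu
        by_cases h : u < t
        · simpa [hXm, h] using hX.1 u hu
        · simpa [hXm, h] using hLU
      · intro u hu
        by_cases h : u < t
        · have h0 : Xm u = X u := by simp [hXm, h]
          rw [h0]
          refine (hX.2.1 u hu).congr' ?_
          filter_upwards [mem_nhdsWithin_of_mem_nhds (isOpen_Iio.mem_nhds h)] with v hv
          simp [hXm, Set.mem_Iio.1 hv]
        · have h0 : Xm u = L := by simp [hXm, h]
          rw [h0]
          refine tendsto_const_nhds.congr' ?_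
          filter_upwards [self_mem_nhdsWithin] with v hv
          have hv' : ¬ v < t := fun hc => h (lt_trans (Set.mem_Ioi.1 hv) hc) |>.elim
          simp [hXm, hv']
      · intro u hu
        by_cases h : u ≤ t
        · obtain ⟨L', hL'U, hL'⟩ := hX.2.2 u hu
          refine ⟨L', hL'U, hL'.congr' ?_⟩
          filter_upwards [self_mem_nhdsWithin] with v hv
          simp [hXm, lt_of_lt_of_le (Set.mem_Iio.1 hv) h]
        · push_neg at h
          refine ⟨L, hLU, tendsto_const_nhds.congr' ?_⟩
          filter_upwards [mem_nhdsWithin_of_mem_nhds (isOpen_Ioi.mem_nhds h)] with v hv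
          simp [hXm, not_lt.2 (le_of_lt (Set.mem_Ioi.1 hv))]
    have hstopXm : stopped Xm t = Xm := by
      funext u
      rcases lt_or_ge u t with h | h
      · simp [stopped, min_eq_right h.le]
      · have e1 : stopped Xm t u = L := by
          simp [stopped, hXm, min_eq_left h, lt_irrefl]
        have e2 : Xm u = L := by simp [hXm, not_lt.2 h]
        rw [e1, e2]
    rw [Metric.tendsto_nhdsWithin_nhds]
    intro ε hε
    obtain ⟨η, hη, hlc⟩ := hF.1.leftCont t ⟨ht0, htT⟩ ε hε Xm hXmc A hA
    rw [Metric.tendsto_nhdsWithin_nhds] at hL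
    obtain ⟨δ₂, hδ₂, hL'⟩ := hL (η/4) (by linarith)
    refine ⟨min δ₂ η, lt_min hδ₂ hη, fun {x} hx hxd => ?_⟩
    have hxt : x < t := Set.mem_Iio.1 hx
    have hdist : t - x < min δ₂ η := by
      rwa [Real.dist_eq, abs_of_neg (by linarith : x - t < 0), neg_sub] at hxd
    have hdδ : t - x < δ₂ := lt_of_lt_of_le hdist (min_le_left _ _)
    have hdη : t - x < η := lt_of_lt_of_le hdist (min_le_right _ _)
    have htx : t - (t - x) = x := by ring
    have hXx : ‖X x - L‖ < η/4 := by
      have := hL' (Set.mem_Iio.2 hxt)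
        (by rw [Real.dist_eq, abs_of_neg (by linarith : x - t < 0), neg_sub]; exact hdδ)
      rwa [dist_eq_norm] at this
    have hsup : supDist T (stopped Xm t) (stopped X (t - (t - x))) < η := by
      rw [hstopXm, htx]
      refine lt_of_le_of_lt (supDist_le (by linarith : (0:ℝ) ≤ η/2) fun u hu => ?_)
        (by linarith : η/2 < η)
      rcases le_or_gt u x with h1 | h1
      · have e : Xm u = stopped X x u := by
          simp [hXm, stopped, min_eq_right h1, lt_of_le_of_lt h1 hxt]
        rw [e, sub_self, norm_zero]; linarith
      · have e2 : stopped X x u = X x := by simp [stopped, min_eq_left h1.le]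
        rw [e2]
        rcases lt_or_ge u t with h3 | h3
        · have e1 : Xm u = X u := by simp [hXm, h3]
          rw [e1]
          have hXu : ‖X u - L‖ < η/4 := by
            have := hL' (Set.mem_Iio.2 h3)
              (by rw [Real.dist_eq, abs_of_neg (by linarith : u - t < 0), neg_sub]; linarith)
            rwa [dist_eq_norm] at this
          calc ‖X u - X x‖ ≤ ‖X u - L‖ + ‖L - X x‖ := norm_sub_le_norm_sub_add_norm_sub _ _ _
          _ ≤ η/4 + η/4 := add_le_add hXu.le (by rw [norm_sub_rev]; exact hXx.le)
          _ = η/2 := by ring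
        · have e1 : Xm u = L := by simp [hXm, not_lt.2 h3]
          rw [e1, norm_sub_rev]
          linarith
    have hres := hlc (t - x) ⟨by linarith, hdη⟩ X hX hsup
    rw [htx] at hres
    rw [Real.dist_eq, abs_sub_comm]
    exact hres
end

section
/- Chain rule, second-order vertical derivatives: In the setting of the chain rule (F_1,…,F_ν∈ℂ^{1,2}_c(U,S) with F(t,X,A)=(F_1,…,F_ν)(t,X,A)∈V for all arguments, G∈ℂ^{1,2}_c(V,W), and H(t,X,(A,B))=G(t,F(·,X,A),B)), the second vertical derivatives of H are given, for i,j=1,…,d, by ∂_{ji}H(t,X,(A,B)) = Σ_{ℓ=1}^{ν} ( Σ_{k=1}^{ν} ∂_{ℓk}G(t,F(·,X,A),B) ∂_iF_ℓ(t,X,A) ∂_jF_k(t,X,A) + ∂_ℓG(t,F(·,X,A),B) ∂_{ji}F_ℓ(t,X,A) ). -/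
open Filter Set MeasureTheory

noncomputable section
open Filter Set MeasureTheory Topology

namespace CRSO

lemma vertPerturb_vertPerturb {d : ℕ} (t : ℝ) (X : FPath d) (v w : Fin d → ℝ) :
    vertPerturb t (vertPerturb t X v) w = vertPerturb t X (v + w) := by
  funext s
  simp only [vertPerturb]
  split_ifs with h
  · rw [add_assoc]
  · rfl

lemma differentiableAt_shift {E F : Type*} [NormedAddCommGroup E] [NormedSpace ℝ E]
    [NormedAddCommGroup F] [NormedSpace ℝ F] {q : E → F} {v : E}
    (h : DifferentiableAt ℝ (fun w => q (v + w)) 0) : DifferentiableAt ℝ q v := by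
  have h' : DifferentiableAt ℝ (fun w => q (v + w)) (v - v) := by simpa using h
  have hc : DifferentiableAt ℝ ((fun w => q (v + w)) ∘ (fun w => w - v)) v :=
    DifferentiableAt.comp v h' (differentiableAt_id.sub_const v)
  have e : ((fun w => q (v + w)) ∘ (fun w => w - v)) = q := by
    funext w
    simp only [Function.comp_apply]
    congr 1
    abel
  rwa [e] at hc

lemma differentiableAt_shift' {E F : Type*} [NormedAddCommGroup E] [NormedSpace ℝ E]
    [NormedAddCommGroup F] [NormedSpace ℝ F] {q : E → F} {v : E}
    (h : DifferentiableAt ℝ q v) : DifferentiableAt ℝ (fun w => q (v + w)) 0 := by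
  have h' : DifferentiableAt ℝ q (v + 0) := by simpa using h
  exact DifferentiableAt.comp 0 h' (differentiableAt_const v |>.add differentiableAt_id)

lemma fderiv_shift {E F : Type*} [NormedAddCommGroup E] [NormedSpace ℝ E]
    [NormedAddCommGroup F] [NormedSpace ℝ F] (q : E → F) (v : E) :
    fderiv ℝ (fun w => q (v + w)) 0 = fderiv ℝ q v := by
  by_cases h : DifferentiableAt ℝ q v
  · have h2 : HasFDerivAt (fun w : E => v + w) (ContinuousLinearMap.id ℝ E) 0 := by
      simpa using (hasFDerivAt_id (0:E)).const_add v
    have h1 : HasFDerivAt q (fderiv ℝ q v) (v + 0) := by simpa using h.hasFDerivAt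
    have := h1.comp (0:E) h2
    simpa [Function.comp_def] using this.fderiv
  · rw [fderiv_zero_of_not_differentiableAt h, fderiv_zero_of_not_differentiableAt]
    exact fun hc => h (differentiableAt_shift hc)

lemma vertD_perturb {d m : ℕ} (F : Fnl d m) (t : ℝ) (X : FPath d) (A : FPath m)
    (v : Fin d → ℝ) :
    vertD F t (vertPerturb t X v) A
      = fun i => fderiv ℝ (fun w => F t (vertPerturb t X w) A) v (Pi.single i 1) := by
  funext i
  simp only [vertD]
  have : (fun w => F t (vertPerturb t (vertPerturb t X v) w) A)
      = fun w => F t (vertPerturb t X (v + w)) A := by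
    funext w; rw [vertPerturb_vertPerturb]
  rw [this, fderiv_shift (fun u => F t (vertPerturb t X u) A) v]

end CRSO
namespace CRSO

lemma clm_apply_eq_sum {ν : ℕ} (L : (Fin ν → ℝ) →L[ℝ] ℝ) (w : Fin ν → ℝ) :
    L w = ∑ k, w k * L (Pi.single k 1) := by
  conv_lhs => rw [← Finset.univ_sum_single w, map_sum]
  refine Finset.sum_congr rfl fun k _ => ?_
  have : (Pi.single k (w k) : Fin ν → ℝ) = (w k) • (Pi.single k 1 : Fin ν → ℝ) := by
    rw [← Pi.single_smul, smul_eq_mul, mul_one]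
  rw [this, ContinuousLinearMap.map_smul, smul_eq_mul]

lemma calc_core {d ν : ℕ} {f : (Fin d → ℝ) → (Fin ν → ℝ)} {g : (Fin ν → ℝ) → ℝ}
    {φ : (Fin d → ℝ) → ℝ} {δ δ' : ℝ} (hδ : 0 < δ) (hδ' : 0 < δ')
    (hf1 : ∀ v ∈ Metric.ball (0 : Fin d → ℝ) δ, DifferentiableAt ℝ f v)
    (hf2 : ∀ (ℓ : Fin ν) (i : Fin d),
      DifferentiableAt ℝ (fun v => fderiv ℝ (fun v' => f v' ℓ) v (Pi.single i 1)) 0)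
    (hg1 : ∀ y ∈ Metric.ball (0 : Fin ν → ℝ) δ', DifferentiableAt ℝ g y)
    (hg2 : ∀ k : Fin ν, DifferentiableAt ℝ (fun y => fderiv ℝ g y (Pi.single k 1)) 0)
    (hmap : ∀ v ∈ Metric.ball (0 : Fin d → ℝ) δ, f v - f 0 ∈ Metric.ball (0 : Fin ν → ℝ) δ')
    (hφ : ∀ v ∈ Metric.ball (0 : Fin d → ℝ) δ, φ v = g (f v - f 0)) (i j : Fin d) :
    fderiv ℝ (fun v => fderiv ℝ φ v (Pi.single i 1)) 0 (Pi.single j 1)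
      = ∑ ℓ, ((∑ k, fderiv ℝ (fun y => fderiv ℝ g y (Pi.single k 1)) 0 (Pi.single ℓ 1)
            * fderiv ℝ (fun v => f v ℓ) 0 (Pi.single i 1)
            * fderiv ℝ (fun v => f v k) 0 (Pi.single j 1))
          + fderiv ℝ g 0 (Pi.single ℓ 1)
            * fderiv ℝ (fun v => fderiv ℝ (fun v' => f v' ℓ) v (Pi.single i 1)) 0
                (Pi.single j 1)) := by
  have h0δ : (0 : Fin d → ℝ) ∈ Metric.ball (0 : Fin d → ℝ) δ := Metric.mem_ball_self hδ
  have h0δ' : (0 : Fin ν → ℝ) ∈ Metric.ball (0 : Fin ν → ℝ) δ' := Metric.mem_ball_self hδ'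
  set p : (Fin d → ℝ) → (Fin ν → ℝ) := fun v => f v - f 0 with hp_def
  have hp0 : p 0 = 0 := sub_self _
  have hp : ∀ v ∈ Metric.ball (0 : Fin d → ℝ) δ, DifferentiableAt ℝ p v :=
    fun v hv => (hf1 v hv).sub_const _
  have hpcomp : ∀ k : Fin ν, (fun v' : Fin d → ℝ => p v' k) = fun v' => f v' k - f 0 k := by
    intro k; rfl
  have hfderiv_p : ∀ v, fderiv ℝ p v = fderiv ℝ f v := by
    intro v; exact fderiv_sub_const _
  -- component formula for the first derivative of φ on the ball
  have identity1 : ∀ v ∈ Metric.ball (0 : Fin d → ℝ) δ,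
      fderiv ℝ φ v (Pi.single i 1)
        = ∑ k, fderiv ℝ g (p v) (Pi.single k 1)
            * fderiv ℝ (fun v' => f v' k) v (Pi.single i 1) := by
    intro v hv
    have hev : φ =ᶠ[nhds v] fun v' => g (p v') :=
      Filter.eventuallyEq_of_mem (Metric.isOpen_ball.mem_nhds hv) (fun v' hv' => hφ v' hv')
    have hgp : DifferentiableAt ℝ g (p v) := hg1 _ (hmap v hv)
    have hchain : fderiv ℝ (fun v' => g (p v')) v = (fderiv ℝ g (p v)).comp (fderiv ℝ p v) :=
      fderiv_comp v hgp (hp v hv)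
    rw [hev.fderiv_eq, hchain]
    rw [ContinuousLinearMap.comp_apply, clm_apply_eq_sum]
    refine Finset.sum_congr rfl fun k _ => ?_
    have hcomp : fderiv ℝ (fun v' => p v' k) v
        = (ContinuousLinearMap.proj k).comp (fderiv ℝ p v) :=
      (hasFDerivAt_pi'.1 (hp v hv).hasFDerivAt k).fderiv
    have h1 : (fderiv ℝ p v (Pi.single i 1)) k
        = fderiv ℝ (fun v' => f v' k) v (Pi.single i 1) := by
      have h2 : fderiv ℝ (fun v' => f v' k - f 0 k) v = fderiv ℝ (fun v' => f v' k) v :=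
        fderiv_sub_const _
      rw [← h2, ← hpcomp k, hcomp]
      rfl
    rw [mul_comm, h1]
  -- names for first/second partials
  set Gfun : Fin ν → (Fin ν → ℝ) → ℝ := fun k y => fderiv ℝ g y (Pi.single k 1) with hGfun
  set Ffun : Fin ν → (Fin d → ℝ) → ℝ :=
    fun k v => fderiv ℝ (fun v' => f v' k) v (Pi.single i 1) with hFfun
  -- symmetry of the second derivative of g at 0
  have symmG : ∀ ℓ k : Fin ν,
      fderiv ℝ (Gfun k) 0 (Pi.single ℓ 1) = fderiv ℝ (Gfun ℓ) 0 (Pi.single k 1) := by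
    intro ℓ k
    set Ψ : (Fin ν → ℝ) → (Fin ν → ℝ) →L[ℝ] ℝ :=
      fun y => ∑ k', (Gfun k' y) • (ContinuousLinearMap.proj (R := ℝ) (φ := fun _ : Fin ν => ℝ) k')
    have hΨeq : ∀ y ∈ Metric.ball (0 : Fin ν → ℝ) δ', fderiv ℝ g y = Ψ y := by
      intro y hy
      ext w
      rw [clm_apply_eq_sum]
      simp only [Ψ, ContinuousLinearMap.sum_apply, ContinuousLinearMap.smul_apply,
        ContinuousLinearMap.proj_apply, smul_eq_mul]
      exact Finset.sum_congr rfl fun k' _ => mul_comm _ _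
    have hΨdiff : DifferentiableAt ℝ Ψ 0 := by
      refine DifferentiableAt.fun_sum fun k' _ => ?_
      exact (hg2 k').smul_const _
    have hev : fderiv ℝ g =ᶠ[nhds (0 : Fin ν → ℝ)] Ψ :=
      Filter.eventuallyEq_of_mem (Metric.isOpen_ball.mem_nhds h0δ') (fun y hy => hΨeq y hy)
    have hfd : HasFDerivAt (fderiv ℝ g) (fderiv ℝ Ψ 0) 0 :=
      hev.hasFDerivAt_iff.2 hΨdiff.hasFDerivAt
    have heventually : ∀ᶠ y in nhds (0 : Fin ν → ℝ), HasFDerivAt g (fderiv ℝ g y) y := by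
      filter_upwards [Metric.isOpen_ball.mem_nhds h0δ'] with y hy
      exact (hg1 y hy).hasFDerivAt
    have hsymm := second_derivative_symmetric_of_eventually heventually hfd
      (Pi.single ℓ 1) (Pi.single k 1)
    have happly : ∀ a b : Fin ν,
        fderiv ℝ (Gfun b) 0 (Pi.single a 1) = fderiv ℝ Ψ 0 (Pi.single a 1) (Pi.single b 1) := by
      intro a b
      have hc : HasFDerivAt (Gfun b)
          ((ContinuousLinearMap.apply ℝ ℝ (Pi.single b 1)).comp (fderiv ℝ Ψ 0)) 0 := by
        have := (ContinuousLinearMap.apply ℝ ℝ (Pi.single b (1:ℝ))).hasFDerivAt.comp 0 hfd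
        exact this
      rw [hc.fderiv]
      rfl
    rw [happly ℓ k, happly k ℓ, hsymm]
  -- second-order computation
  have hq1 : ∀ k : Fin ν, HasFDerivAt (fun v => Gfun k (p v))
      ((fderiv ℝ (Gfun k) 0).comp (fderiv ℝ p 0)) 0 := by
    intro k
    have hGk : HasFDerivAt (Gfun k) (fderiv ℝ (Gfun k) 0) (p 0) := by
      rw [hp0]; exact (hg2 k).hasFDerivAt
    exact hGk.comp 0 (hp 0 h0δ).hasFDerivAt
  have hq2 : ∀ k : Fin ν, HasFDerivAt (Ffun k) (fderiv ℝ (Ffun k) 0) 0 :=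
    fun k => (hf2 k i).hasFDerivAt
  have hprod : HasFDerivAt (fun v => ∑ k, Gfun k (p v) * Ffun k v)
      (∑ k, ((Gfun k (p 0)) • (fderiv ℝ (Ffun k) 0)
        + (Ffun k 0) • ((fderiv ℝ (Gfun k) 0).comp (fderiv ℝ p 0)))) 0 := by
    refine HasFDerivAt.fun_sum fun k _ => ?_
    exact (hq1 k).mul (hq2 k)
  have houter : fderiv ℝ (fun v => fderiv ℝ φ v (Pi.single i 1)) 0
      = ∑ k, ((Gfun k (p 0)) • (fderiv ℝ (Ffun k) 0)
        + (Ffun k 0) • ((fderiv ℝ (Gfun k) 0).comp (fderiv ℝ p 0))) := by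
    have hev : (fun v => fderiv ℝ φ v (Pi.single i 1))
        =ᶠ[nhds (0 : Fin d → ℝ)] fun v => ∑ k, Gfun k (p v) * Ffun k v :=
      Filter.eventuallyEq_of_mem (Metric.isOpen_ball.mem_nhds h0δ)
        (fun v hv => identity1 v hv)
    rw [hev.fderiv_eq, hprod.fderiv]
  rw [houter]
  -- expand and evaluate
  have hpcompj : ∀ ℓ' : Fin ν, (fderiv ℝ p 0 (Pi.single j 1)) ℓ'
      = fderiv ℝ (fun v' => f v' ℓ') 0 (Pi.single j 1) := by
    intro ℓ'
    have hcomp : fderiv ℝ (fun v' => p v' ℓ')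
        0 = (ContinuousLinearMap.proj ℓ').comp (fderiv ℝ p 0) :=
      (hasFDerivAt_pi'.1 (hp 0 h0δ).hasFDerivAt ℓ').fderiv
    have h2 : fderiv ℝ (fun v' => f v' ℓ' - f 0 ℓ') 0 = fderiv ℝ (fun v' => f v' ℓ') 0 :=
      fderiv_sub_const _
    rw [← h2, ← hpcomp ℓ', hcomp]
    rfl
  simp only [ContinuousLinearMap.sum_apply, ContinuousLinearMap.add_apply,
    ContinuousLinearMap.smul_apply, ContinuousLinearMap.comp_apply, smul_eq_mul, hp0]
  have hexp : ∀ k : Fin ν, fderiv ℝ (Gfun k) 0 (fderiv ℝ p 0 (Pi.single j 1))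
      = ∑ ℓ', fderiv ℝ (fun v' => f v' ℓ') 0 (Pi.single j 1)
          * fderiv ℝ (Gfun k) 0 (Pi.single ℓ' 1) := by
    intro k
    rw [clm_apply_eq_sum (fderiv ℝ (Gfun k) 0) (fderiv ℝ p 0 (Pi.single j 1))]
    exact Finset.sum_congr rfl fun ℓ' _ => by rw [hpcompj ℓ']
  calc (∑ k, (Gfun k 0 * fderiv ℝ (Ffun k) 0 (Pi.single j 1)
        + Ffun k 0 * fderiv ℝ (Gfun k) 0 (fderiv ℝ p 0 (Pi.single j 1))))
      = ∑ k, (Gfun k 0 * fderiv ℝ (Ffun k) 0 (Pi.single j 1))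
        + ∑ k, ∑ ℓ', (fderiv ℝ (Gfun k) 0 (Pi.single ℓ' 1) * Ffun k 0
            * fderiv ℝ (fun v' => f v' ℓ') 0 (Pi.single j 1)) := by
        rw [← Finset.sum_add_distrib]
        refine Finset.sum_congr rfl fun k _ => ?_
        congr 1
        rw [hexp k, Finset.mul_sum]
        exact Finset.sum_congr rfl fun ℓ' _ => by ring
    _ = ∑ ℓ, ((∑ k, fderiv ℝ (Gfun k) 0 (Pi.single ℓ 1)
            * fderiv ℝ (fun v => f v ℓ) 0 (Pi.single i 1)
            * fderiv ℝ (fun v => f v k) 0 (Pi.single j 1))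
          + fderiv ℝ g 0 (Pi.single ℓ 1)
            * fderiv ℝ (Ffun ℓ) 0 (Pi.single j 1)) := by
        rw [Finset.sum_add_distrib]
        rw [add_comm]
        congr 1
        · refine Finset.sum_congr rfl fun ℓ _ => Finset.sum_congr rfl fun k _ => ?_
          rw [symmG k ℓ]
  
end CRSO
namespace CRSO
open Bornology

variable {d : ℕ} {T : ℝ} {U : Set (Fin d → ℝ)} {X : FPath d}

lemma isBounded_image (hX : IsCadlag T U X) : IsBounded (X '' Icc 0 T) := by
  have key : ∀ a ∈ Icc (0:ℝ) T, ∃ ε > 0, IsBounded (X '' (Ioo (a-ε) (a+ε) ∩ Icc 0 T)) := by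
    intro a ha
    obtain ⟨ε₁, hε₁, hR⟩ : ∃ ε₁ > 0, ∀ r ∈ Icc (0:ℝ) T, r ∈ Ioo a (a+ε₁) →
        dist (X r) (X a) < 1 := by
      rcases lt_or_eq_of_le ha.2 with haT | haT
      · have h1 := hX.2.1 a ⟨ha.1, haT⟩
        rw [Metric.tendsto_nhdsWithin_nhds] at h1
        obtain ⟨δ, hδ, h⟩ := h1 1 one_pos
        refine ⟨δ, hδ, fun r _ hr => h hr.1 ?_⟩
        rw [Real.dist_eq, abs_lt]
        constructor <;> [linarith [hr.1]; linarith [hr.2]]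
      · exact ⟨1, one_pos, fun r hrIcc hr => absurd (hrIcc.2.trans_lt (haT ▸ hr.1)) (lt_irrefl r)⟩
    obtain ⟨L, ε₂, hε₂, hLf⟩ : ∃ (L : Fin d → ℝ), ∃ ε₂ > 0, ∀ r ∈ Icc (0:ℝ) T,
        r ∈ Ioo (a-ε₂) a → dist (X r) L < 1 := by
      rcases lt_or_eq_of_le ha.1 with ha0 | ha0
      · obtain ⟨L, _, hL⟩ := hX.2.2 a ⟨ha0, ha.2⟩
        rw [Metric.tendsto_nhdsWithin_nhds] at hL
        obtain ⟨δ, hδ, h⟩ := hL 1 one_pos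
        refine ⟨L, δ, hδ, fun r _ hr => h hr.2 ?_⟩
        rw [Real.dist_eq, abs_lt]
        constructor <;> [linarith [hr.1]; linarith [hr.2]]
      · exact ⟨X a, 1, one_pos, fun r hrIcc hr =>
          absurd ((ha0 ▸ hrIcc.1 : a ≤ r).trans_lt' hr.2) (by simp)⟩
    refine ⟨min ε₁ ε₂, lt_min hε₁ hε₂, ?_⟩
    have hsub : X '' (Ioo (a - min ε₁ ε₂) (a + min ε₁ ε₂) ∩ Icc 0 T)
        ⊆ Metric.closedBall (X a) 1 ∪ Metric.closedBall L 1 ∪ {X a} := by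
      rintro y ⟨r, ⟨hrIoo, hrIcc⟩, rfl⟩
      rcases lt_trichotomy r a with h | h | h
      · refine Or.inl (Or.inr (le_of_lt (hLf r hrIcc ⟨?_, h⟩)))
        have := hrIoo.1; have : a - ε₂ ≤ a - min ε₁ ε₂ := by
          have := min_le_right ε₁ ε₂; linarith
        linarith [hrIoo.1]
      · subst h; exact Or.inr rfl
      · refine Or.inl (Or.inl (le_of_lt (hR r hrIcc ⟨h, ?_⟩)))
        have := min_le_left ε₁ ε₂; linarith [hrIoo.2]
    exact (((Metric.isBounded_closedBall).union Metric.isBounded_closedBall).union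
      isBounded_singleton).subset hsub
  choose! ε hε hbd using key
  obtain ⟨s, hsmem, hcover⟩ := isCompact_Icc.elim_nhds_subcover
    (fun a => Ioo (a - ε a) (a + ε a))
    (fun a ha => Ioo_mem_nhds (by linarith [hε a ha]) (by linarith [hε a ha]))
  have : X '' Icc 0 T ⊆ ⋃ a ∈ s, X '' (Ioo (a - ε a) (a + ε a) ∩ Icc 0 T) := by
    rintro y ⟨r, hr, rfl⟩
    obtain ⟨a, has, hra⟩ := mem_iUnion₂.1 (hcover hr)
    exact mem_iUnion₂.2 ⟨a, has, mem_image_of_mem X ⟨hra, hr⟩⟩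
  exact ((Bornology.isBounded_biUnion s.finite_toSet).2 fun a has => hbd a (hsmem a has)).subset this

lemma closure_image_subset (hX : IsCadlag T U X) :
    closure (X '' Icc 0 T) ⊆ U := by
  intro z hz
  obtain ⟨x, hx, hxz⟩ := mem_closure_iff_seq_limit.1 hz
  choose sn hsn hXsn using fun n => hx n
  obtain ⟨a, ha, φ, hφ, hsφ⟩ := isCompact_Icc.tendsto_subseq hsn
  have htri : ∃ᶠ n in (atTop : Filter ℕ), (sn (φ n) < a ∨ sn (φ n) = a ∨ a < sn (φ n)) :=
    Filter.Eventually.frequently (Filter.Eventually.of_forall fun n => lt_trichotomy _ _)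
  rw [Filter.frequently_or_distrib, Filter.frequently_or_distrib] at htri
  have hXz : Tendsto (fun n => X (sn (φ n))) atTop (nhds z) := by
    have : (fun n => X (sn (φ n))) = (fun n => x (φ n)) := by
      funext n; rw [hXsn]
    rw [this]
    exact hxz.comp hφ.tendsto_atTop
  rcases htri with hlt | heq | hgt
  · -- frequently sn (φ n) < a : left limit
    obtain ⟨ψ, hψ, hP⟩ := Filter.extraction_of_frequently_atTop hlt
    have ha0 : 0 < a := lt_of_le_of_lt (hsn (φ (ψ 0))).1 (hP 0)
    obtain ⟨L, hLU, hL⟩ := hX.2.2 a ⟨ha0, ha.2⟩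
    have h1 : Tendsto (fun n => sn (φ (ψ n))) atTop (nhdsWithin a (Iio a)) := by
      rw [tendsto_nhdsWithin_iff]
      exact ⟨hsφ.comp hψ.tendsto_atTop, Filter.Eventually.of_forall hP⟩
    have h2 : Tendsto (fun n => X (sn (φ (ψ n)))) atTop (nhds L) := hL.comp h1
    have h3 : Tendsto (fun n => X (sn (φ (ψ n)))) atTop (nhds z) :=
      hXz.comp hψ.tendsto_atTop
    rwa [tendsto_nhds_unique h3 h2]
  · -- frequently sn (φ n) = a
    obtain ⟨ψ, hψ, hP⟩ := Filter.extraction_of_frequently_atTop heq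
    have h3 : Tendsto (fun n => X (sn (φ (ψ n)))) atTop (nhds z) :=
      hXz.comp hψ.tendsto_atTop
    have h2 : Tendsto (fun n => X (sn (φ (ψ n)))) atTop (nhds (X a)) := by
      have : (fun n => X (sn (φ (ψ n)))) = fun _ => X a := by
        funext n; rw [hP n]
      rw [this]; exact tendsto_const_nhds
    rw [tendsto_nhds_unique h3 h2]
    exact hX.1 a ha
  · -- frequently sn (φ n) > a : right continuity
    obtain ⟨ψ, hψ, hP⟩ := Filter.extraction_of_frequently_atTop hgt
    have haT : a < T := lt_of_lt_of_le (hP 0) (hsn (φ (ψ 0))).2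
    have h1 : Tendsto (fun n => sn (φ (ψ n))) atTop (nhdsWithin a (Ioi a)) := by
      rw [tendsto_nhdsWithin_iff]
      exact ⟨hsφ.comp hψ.tendsto_atTop, Filter.Eventually.of_forall hP⟩
    have h2 : Tendsto (fun n => X (sn (φ (ψ n)))) atTop (nhds (X a)) :=
      (hX.2.1 a ⟨ha.1, haT⟩).comp h1
    have h3 : Tendsto (fun n => X (sn (φ (ψ n)))) atTop (nhds z) :=
      hXz.comp hψ.tendsto_atTop
    rw [tendsto_nhds_unique h3 h2]
    exact hX.1 a ha

lemma cadlag_closure (hX : IsCadlag T U X) :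
    IsCadlag T (closure (X '' Icc 0 T)) X := by
  refine ⟨fun s hs => subset_closure (mem_image_of_mem X hs), hX.2.1, fun s hs => ?_⟩
  obtain ⟨L, _, hL⟩ := hX.2.2 s hs
  refine ⟨L, ?_, hL⟩
  have hmem : ∀ᶠ r in nhdsWithin s (Iio s), X r ∈ X '' Icc 0 T := by
    have h1 : Ioo (0:ℝ) s ∈ nhdsWithin s (Iio s) := by
      rw [mem_nhdsWithin]
      exact ⟨Ioi 0, isOpen_Ioi, hs.1, fun r hr => ⟨hr.1, hr.2⟩⟩
    filter_upwards [h1] with r hr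
    exact mem_image_of_mem X ⟨le_of_lt hr.1, le_of_lt (lt_of_lt_of_le hr.2 hs.2)⟩
  exact mem_closure_of_tendsto hL hmem

lemma vertPerturb_cadlag_family (hU : IsOpen U) (hX : IsCadlag T U X) (t0 : ℝ) :
    ∃ δ > 0, ∀ v : Fin d → ℝ, ‖v‖ < δ → IsCadlag T U (vertPerturb t0 X v) := by
  set K := closure (X '' Icc 0 T) with hK
  have hKc : IsCompact K := (isBounded_image hX).isCompact_closure
  have hKU : K ⊆ U := closure_image_subset hX
  obtain ⟨δ, hδ, hth⟩ := hKc.exists_thickening_subset_open hU hKU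
  have hmem : ∀ z ∈ K, ∀ v : Fin d → ℝ, ‖v‖ < δ → z + v ∈ U := by
    intro z hz v hv
    apply hth
    rw [Metric.mem_thickening_iff]
    exact ⟨z, hz, by simpa [dist_eq_norm] using hv⟩
  refine ⟨δ, hδ, fun v hv => ⟨?_, ?_, ?_⟩⟩
  · intro s hs
    by_cases hts : t0 ≤ s
    · simp only [vertPerturb, if_pos hts]
      exact hmem _ (subset_closure (mem_image_of_mem X hs)) v hv
    · simp only [vertPerturb, if_neg hts]
      exact hX.1 s hs
  · intro s hs
    rcases le_or_gt t0 s with hts | hts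
    · have hev : ∀ᶠ r in nhdsWithin s (Ioi s), vertPerturb t0 X v r = X r + v := by
        filter_upwards [self_mem_nhdsWithin] with r hr
        simp only [vertPerturb, if_pos (hts.trans (le_of_lt hr))]
      have : Tendsto (fun r => X r + v) (nhdsWithin s (Ioi s)) (nhds (X s + v)) :=
        (hX.2.1 s hs).add tendsto_const_nhds
      have h2 := this.congr' (hev.mono fun r h => h.symm)
      simpa only [vertPerturb, if_pos hts] using h2
    · have hIoo : Ioo s t0 ∈ nhdsWithin s (Ioi s) := by
        rw [mem_nhdsWithin]
        exact ⟨Iio t0, isOpen_Iio, hts, fun r hr => ⟨hr.2, hr.1⟩⟩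
      have hev : ∀ᶠ r in nhdsWithin s (Ioi s), vertPerturb t0 X v r = X r := by
        filter_upwards [hIoo] with r hr
        simp only [vertPerturb, if_neg (not_le.2 hr.2)]
      have h2 := (hX.2.1 s hs).congr' (hev.mono fun r h => h.symm)
      simpa only [vertPerturb, if_neg (not_le.2 hts)] using h2
  · intro s hs
    obtain ⟨L, hLU, hL⟩ := hX.2.2 s hs
    rcases le_or_gt s t0 with hts | hts
    · refine ⟨L, hLU, ?_⟩
      have hev : ∀ᶠ r in nhdsWithin s (Iio s), vertPerturb t0 X v r = X r := by
        filter_upwards [self_mem_nhdsWithin] with r hr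
        simp only [vertPerturb, if_neg (not_le.2 (lt_of_lt_of_le hr hts))]
      exact hL.congr' (hev.mono fun r h => h.symm)
    · have hLK : L ∈ K := by
        have hmem' : ∀ᶠ r in nhdsWithin s (Iio s), X r ∈ X '' Icc 0 T := by
          have h1 : Ioo (0:ℝ) s ∈ nhdsWithin s (Iio s) := by
            rw [mem_nhdsWithin]
            exact ⟨Ioi 0, isOpen_Ioi, hs.1, fun r hr => ⟨hr.1, hr.2⟩⟩
          filter_upwards [h1] with r hr
          exact mem_image_of_mem X ⟨le_of_lt hr.1, le_of_lt (lt_of_lt_of_le hr.2 hs.2)⟩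
        exact mem_closure_of_tendsto hL hmem'
      refine ⟨L + v, hmem _ hLK v hv, ?_⟩
      have hIoo : Ioo t0 s ∈ nhdsWithin s (Iio s) := by
        rw [mem_nhdsWithin]
        exact ⟨Ioi t0, isOpen_Ioi, hts, fun r hr => ⟨hr.1, hr.2⟩⟩
      have hev : ∀ᶠ r in nhdsWithin s (Iio s), vertPerturb t0 X v r = X r + v := by
        filter_upwards [hIoo] with r hr
        simp only [vertPerturb, if_pos (le_of_lt hr.1)]
      exact ((hL.add tendsto_const_nhds).congr' (hev.mono fun r h => h.symm))

lemma stopped_cadlag (hX : IsCadlag T U X) {u : ℝ} (hu : u ∈ Icc (0:ℝ) T) :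
    IsCadlag T U (stopped X u) := by
  refine ⟨?_, ?_, ?_⟩
  · intro s hs
    exact hX.1 _ ⟨le_min hu.1 hs.1, le_trans (min_le_left _ _) hu.2⟩
  · intro s hs
    rcases lt_or_ge s u with hsu | hsu
    · have hIoo : Ioo s u ∈ nhdsWithin s (Ioi s) := by
        rw [mem_nhdsWithin]
        exact ⟨Iio u, isOpen_Iio, hsu, fun r hr => ⟨hr.2, hr.1⟩⟩
      have hev : ∀ᶠ r in nhdsWithin s (Ioi s), stopped X u r = X r := by
        filter_upwards [hIoo] with r hr
        simp only [stopped, min_eq_right (le_of_lt hr.2)]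
      have h2 := (hX.2.1 s hs).congr' (hev.mono fun r h => h.symm)
      simpa only [stopped, min_eq_right (le_of_lt hsu)] using h2
    · have hev : ∀ᶠ r in nhdsWithin s (Ioi s), stopped X u r = X u := by
        filter_upwards [self_mem_nhdsWithin] with r hr
        simp only [stopped, min_eq_left (hsu.trans (le_of_lt hr))]
      have h2 := (tendsto_const_nhds : Tendsto (fun _ : ℝ => X u) (nhdsWithin s (Ioi s))
        (nhds (X u))).congr' (hev.mono fun r h => h.symm)
      simpa only [stopped, min_eq_left hsu] using h2
  · intro s hs
    rcases le_or_gt s u with hsu | hsu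
    · obtain ⟨L, hLU, hL⟩ := hX.2.2 s hs
      refine ⟨L, hLU, ?_⟩
      have hev : ∀ᶠ r in nhdsWithin s (Iio s), stopped X u r = X r := by
        filter_upwards [self_mem_nhdsWithin] with r hr
        simp only [stopped, min_eq_right (le_of_lt (lt_of_lt_of_le hr hsu))]
      exact hL.congr' (hev.mono fun r h => h.symm)
    · refine ⟨X u, hX.1 u hu, ?_⟩
      have hIoo : Ioo u s ∈ nhdsWithin s (Iio s) := by
        rw [mem_nhdsWithin]
        exact ⟨Ioi u, isOpen_Ioi, hsu, fun r hr => ⟨hr.1, hr.2⟩⟩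
      have hev : ∀ᶠ r in nhdsWithin s (Iio s), stopped X u r = X u := by
        filter_upwards [hIoo] with r hr
        simp only [stopped, min_eq_left (le_of_lt hr.1)]
      exact (tendsto_const_nhds.congr' (hev.mono fun r h => h.symm))

lemma stopped_stopped (X : FPath d) (u : ℝ) : stopped (stopped X u) u = stopped X u := by
  funext s
  simp only [stopped]
  rw [← min_assoc, min_self]

lemma eq_of_eqOn_Icc {m : ℕ} {S : Set (Fin m → ℝ)} {F : Fnl d m} (hT : 0 ≤ T)
    (hc : ContInXLocUnifT T U S F) {t : ℝ} (ht : t ∈ Icc (0:ℝ) T) {X Y : FPath d}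
    (hX : IsCadlag T U X) (hY : IsCadlag T U Y) {A : FPath m} (hA : IsCBV T S A)
    (heq : ∀ s ∈ Icc (0:ℝ) T, X s = Y s) : F t X A = F t Y A := by
  have hne : Nonempty (Icc (0:ℝ) T) := ⟨⟨0, le_refl 0, hT⟩⟩
  have hsup : supDist T X Y = 0 := by
    unfold supDist
    have : (fun u : Icc (0:ℝ) T => ‖X u.1 - Y u.1‖) = fun _ => 0 := by
      funext u; rw [heq u.1 u.2, sub_self, norm_zero]
    rw [this, ciSup_const]
  by_contra hne2
  have hpos : 0 < |F t X A - F t Y A| := abs_pos.2 (sub_ne_zero.2 hne2)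
  obtain ⟨η, hη, h⟩ := hc _ hpos t ht X hX A hA
  have := h t ht Y hY (by rw [hsup]; exact hη) (by simpa using hη)
  exact absurd this (lt_irrefl _)

end CRSO
namespace CRSO

/-- Jordan decomposition of a continuous function of bounded variation on `[0,T]` into
right-continuous monotone (Stieltjes) parts. -/
lemma jordan_decomp {T : ℝ} (hT : 0 ≤ T) {f : ℝ → ℝ} (hf : ContinuousOn f (Icc 0 T))
    (hbv : BoundedVariationOn f (Icc 0 T)) :
    ∃ p n : StieltjesFunction ℝ, ∀ r ∈ Icc (0:ℝ) T, f r = p r - n r := by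
  set c : ℝ → ℝ := fun r => max 0 (min r T) with hc
  have hcmono : Monotone c := fun x y hxy =>
    max_le_max (le_refl 0) (min_le_min hxy (le_refl T))
  have hccont : Continuous c := continuous_const.max (continuous_id.min continuous_const)
  have hcmem : ∀ r, c r ∈ Icc (0:ℝ) T := fun r =>
    ⟨le_max_left _ _, max_le hT (min_le_right _ _)⟩
  have hceq : ∀ r ∈ Icc (0:ℝ) T, c r = r := fun r hr => by
    simp only [hc, min_eq_left hr.2, max_eq_right hr.1]
  have h0 : (0:ℝ) ∈ Icc (0:ℝ) T := ⟨le_refl 0, hT⟩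
  have hloc : LocallyBoundedVariationOn f (Icc 0 T) := hbv.locallyBoundedVariationOn
  have hfc : Continuous (fun r => f (c r)) := hf.comp_continuous hccont hcmem
  set q : ℝ → ℝ := fun r => variationOnFromTo f (Icc 0 T) 0 (c r) with hq
  have hqmono : Monotone q := fun x y hxy =>
    variationOnFromTo.monotoneOn hloc h0 (hcmem x) (hcmem y) (hcmono hxy)
  set q2 : ℝ → ℝ := fun r => q r - f (c r) with hq2
  have hq2mono : Monotone q2 := fun x y hxy =>
    variationOnFromTo.sub_self_monotoneOn hloc h0 (hcmem x) (hcmem y) (hcmono hxy)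
  refine ⟨hqmono.stieltjesFunction, hq2mono.stieltjesFunction, fun r hr => ?_⟩
  have h1 : Tendsto q (nhdsWithin r (Ioi r)) (nhds (hqmono.stieltjesFunction r)) := by
    rw [Monotone.stieltjesFunction_eq]
    exact hqmono.tendsto_rightLim r
  have h2 : Tendsto q2 (nhdsWithin r (Ioi r)) (nhds (hq2mono.stieltjesFunction r)) := by
    rw [Monotone.stieltjesFunction_eq]
    exact hq2mono.tendsto_rightLim r
  have h3 : Tendsto (fun x => q x - q2 x) (nhdsWithin r (Ioi r))
      (nhds (hqmono.stieltjesFunction r - hq2mono.stieltjesFunction r)) := h1.sub h2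
  have h4 : Tendsto (fun x => q x - q2 x) (nhdsWithin r (Ioi r)) (nhds (f (c r))) := by
    have : (fun x => q x - q2 x) = fun x => f (c x) := by
      funext x; simp only [hq2]; ring
    rw [this]
    exact (hfc.tendsto r).mono_left nhdsWithin_le_nhds
  have := tendsto_nhds_unique h4 h3
  rw [hceq r hr] at this
  exact this

/-- Exchange a Stieltjes integral bound through an alternative Jordan decomposition. -/
lemma stieltjes_interchange {u s C : ℝ} (hus : u ≤ s) (P N p n : StieltjesFunction ℝ)
    (hrel : ∀ r ∈ Icc u s, P r - N r = p r - n r)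
    {h : ℝ → ℝ} (hmeas : Measurable fun r : Icc u s => h r)
    (hbound : ∀ r ∈ Ioc u s, |h r| ≤ C)
    (hiP : IntervalIntegrable h P.measure u s) (hiN : IntervalIntegrable h N.measure u s) :
    |(∫ r in u..s, h r ∂P.measure) - ∫ r in u..s, h r ∂N.measure|
      ≤ C * ((p s - p u) + (n s - n u)) := by
  classical
  have hIoc : MeasurableSet (Ioc u s) := measurableSet_Ioc
  set h' : ℝ → ℝ := fun r => if hr : r ∈ Icc u s then h r else 0 with hh'
  have hmeas' : Measurable h' :=
    Measurable.dite hmeas measurable_const measurableSet_Icc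
  have hae : ∀ μ0 : Measure ℝ, h =ᵐ[μ0.restrict (Ioc u s)] h' := by
    intro μ0
    rw [Filter.EventuallyEq, ae_restrict_iff' hIoc]
    exact Filter.Eventually.of_forall fun r hr =>
      (dif_pos (Ioc_subset_Icc_self hr) : h' r = h r).symm
  have hbound' : ∀ r ∈ Ioc u s, |h' r| ≤ C := by
    intro r hr
    rw [hh']
    simp only [dif_pos (Ioc_subset_Icc_self hr)]
    exact hbound r hr
  -- the two combined restricted measures agree
  have hkey : P.measure.restrict (Ioc u s) + n.measure.restrict (Ioc u s)
      = N.measure.restrict (Ioc u s) + p.measure.restrict (Ioc u s) := by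
    have hfin : ∀ μ0 : StieltjesFunction ℝ, IsFiniteMeasure (μ0.measure.restrict (Ioc u s)) := by
      intro μ0
      constructor
      rw [Measure.restrict_apply_univ, StieltjesFunction.measure_Ioc]
      exact ENNReal.ofReal_lt_top
    haveI := hfin P; haveI := hfin N; haveI := hfin p; haveI := hfin n
    have hval : ∀ (μ0 : StieltjesFunction ℝ) (a b : ℝ),
        (μ0.measure.restrict (Ioc u s)) (Ioc a b)
          = ENNReal.ofReal (μ0 (min b s) - μ0 (max a u)) := by
      intro μ0 a b
      rw [Measure.restrict_apply measurableSet_Ioc, Ioc_inter_Ioc, StieltjesFunction.measure_Ioc]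
    have hvalu : ∀ μ0 : StieltjesFunction ℝ,
        (μ0.measure.restrict (Ioc u s)) univ = ENNReal.ofReal (μ0 s - μ0 u) := by
      intro μ0
      rw [Measure.restrict_apply_univ, StieltjesFunction.measure_Ioc]
    have hcalc : ∀ a b : ℝ,
        ENNReal.ofReal (P (min b s) - P (max a u)) + ENNReal.ofReal (n (min b s) - n (max a u))
        = ENNReal.ofReal (N (min b s) - N (max a u))
          + ENNReal.ofReal (p (min b s) - p (max a u)) := by
      intro a b
      set α := max a u with hα
      set β := min b s with hβ
      rcases le_or_gt α β with hab | hab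
      · have hαm : α ∈ Icc u s := ⟨le_max_right _ _, hab.trans (min_le_right _ _)⟩
        have hβm : β ∈ Icc u s := ⟨le_trans (le_max_right _ _) hab, min_le_right _ _⟩
        have e1 := hrel α hαm
        have e2 := hrel β hβm
        rw [← ENNReal.ofReal_add (by linarith [P.mono hab, n.mono hab] : (0:ℝ) ≤ P β - P α)
            (by linarith [n.mono hab] : (0:ℝ) ≤ n β - n α)]
        rw [← ENNReal.ofReal_add (by linarith [N.mono hab] : (0:ℝ) ≤ N β - N α)
            (by linarith [p.mono hab] : (0:ℝ) ≤ p β - p α)]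
        congr 1
        linarith
      · rw [ENNReal.ofReal_of_nonpos (by linarith [P.mono hab.le] : P β - P α ≤ 0),
          ENNReal.ofReal_of_nonpos (by linarith [n.mono hab.le] : n β - n α ≤ 0),
          ENNReal.ofReal_of_nonpos (by linarith [N.mono hab.le] : N β - N α ≤ 0),
          ENNReal.ofReal_of_nonpos (by linarith [p.mono hab.le] : p β - p α ≤ 0)]
    refine ext_of_generate_finite _ (borel_eq_generateFrom_Ioc ℝ)
      (isPiSystem_Ioc (id : ℝ → ℝ) (id : ℝ → ℝ)) ?_ ?_
    · rintro S ⟨a, b, hab, rfl⟩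
      simp only [Measure.coe_add, Pi.add_apply]
      rw [hval P, hval n, hval N, hval p]
      exact hcalc a b
    · simp only [Measure.coe_add, Pi.add_apply]
      rw [hvalu P, hvalu n, hvalu N, hvalu p]
      have e1 := hrel u ⟨le_refl u, hus⟩
      have e2 := hrel s ⟨hus, le_refl s⟩
      rw [← ENNReal.ofReal_add (by linarith [P.mono hus] : (0:ℝ) ≤ P s - P u)
          (by linarith [n.mono hus] : (0:ℝ) ≤ n s - n u),
        ← ENNReal.ofReal_add (by linarith [N.mono hus] : (0:ℝ) ≤ N s - N u)
          (by linarith [p.mono hus] : (0:ℝ) ≤ p s - p u)]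
      congr 1
      linarith
  -- integrability
  have hintP : IntegrableOn h' (Ioc u s) P.measure :=
    Integrable.congr ((intervalIntegrable_iff_integrableOn_Ioc_of_le hus).1 hiP) (hae P.measure)
  have hintN : IntegrableOn h' (Ioc u s) N.measure :=
    Integrable.congr ((intervalIntegrable_iff_integrableOn_Ioc_of_le hus).1 hiN) (hae N.measure)
  have hfin : ∀ μ0 : StieltjesFunction ℝ, IsFiniteMeasure (μ0.measure.restrict (Ioc u s)) := by
    intro μ0
    constructor
    rw [Measure.restrict_apply_univ, StieltjesFunction.measure_Ioc]
    exact ENNReal.ofReal_lt_top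
  have hintgen : ∀ μ0 : StieltjesFunction ℝ, Integrable h' (μ0.measure.restrict (Ioc u s)) := by
    intro μ0
    haveI := hfin μ0
    refine Integrable.mono' (integrable_const C) hmeas'.aestronglyMeasurable ?_
    rw [ae_restrict_iff' hIoc]
    exact Filter.Eventually.of_forall fun r hr => by
      rw [Real.norm_eq_abs]; exact hbound' r hr
  have hintp := hintgen p
  have hintn := hintgen n
  -- the exchange identity
  have hex : (∫ r in Ioc u s, h' r ∂P.measure) + (∫ r in Ioc u s, h' r ∂n.measure)
      = (∫ r in Ioc u s, h' r ∂N.measure) + (∫ r in Ioc u s, h' r ∂p.measure) := by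
    rw [← integral_add_measure hintP hintn, ← integral_add_measure hintN hintp, hkey]
  rw [intervalIntegral.integral_of_le hus, intervalIntegral.integral_of_le hus]
  rw [integral_congr_ae (hae P.measure), integral_congr_ae (hae N.measure)]
  have e3 : (∫ r in Ioc u s, h' r ∂P.measure) - (∫ r in Ioc u s, h' r ∂N.measure)
      = (∫ r in Ioc u s, h' r ∂p.measure) - (∫ r in Ioc u s, h' r ∂n.measure) := by
    linarith [hex]
  rw [e3]
  have hb : ∀ μ0 : StieltjesFunction ℝ,
      |∫ r in Ioc u s, h' r ∂μ0.measure| ≤ C * (μ0 s - μ0 u) := by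
    intro μ0
    haveI := hfin μ0
    have hbd : ∀ᵐ r ∂(μ0.measure.restrict (Ioc u s)), ‖h' r‖ ≤ C := by
      rw [ae_restrict_iff' hIoc]
      exact Filter.Eventually.of_forall fun r hr => by
        rw [Real.norm_eq_abs]; exact hbound' r hr
    have := norm_integral_le_of_norm_le_const (μ := μ0.measure.restrict (Ioc u s)) hbd
    rw [measureReal_def, Measure.restrict_apply_univ, StieltjesFunction.measure_Ioc,
      ENNReal.toReal_ofReal (by linarith [μ0.mono hus] : (0:ℝ) ≤ μ0 s - μ0 u)] at this
    simpa [Real.norm_eq_abs] using this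
  have htri : |(∫ r in Ioc u s, h' r ∂p.measure) - (∫ r in Ioc u s, h' r ∂n.measure)|
      ≤ |∫ r in Ioc u s, h' r ∂p.measure| + |∫ r in Ioc u s, h' r ∂n.measure| := by
    rw [sub_eq_add_neg]
    exact (abs_add_le _ _).trans (by rw [abs_neg])
  have := htri.trans (add_le_add (hb p) (hb n))
  linarith

end CRSO
namespace CRSO

variable {d m : ℕ} {T : ℝ} {U : Set (Fin d → ℝ)} {S : Set (Fin m → ℝ)}

/-- The path equal to `X` before `u` and frozen at the left limit `L` from `u` on. -/
noncomputable def leftStopped {d : ℕ} (X : FPath d) (u : ℝ) (L : Fin d → ℝ) : FPath d :=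
  fun s => if s < u then X s else L

lemma leftStopped_cadlag {X : FPath d} (hX : IsCadlag T U X) {u : ℝ} (hu : u ∈ Ioc (0:ℝ) T)
    {L : Fin d → ℝ} (hLU : L ∈ U) (hL : Tendsto X (nhdsWithin u (Iio u)) (nhds L)) :
    IsCadlag T U (leftStopped X u L) := by
  refine ⟨?_, ?_, ?_⟩
  · intro s hs
    by_cases hsu : s < u
    · simpa only [leftStopped, if_pos hsu] using hX.1 s hs
    · simpa only [leftStopped, if_neg hsu] using hLU
  · intro s hs
    rcases lt_or_ge s u with hsu | hsu
    · have hIoo : Ioo s u ∈ nhdsWithin s (Ioi s) := by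
        rw [mem_nhdsWithin]
        exact ⟨Iio u, isOpen_Iio, hsu, fun r hr => ⟨hr.2, hr.1⟩⟩
      have hev : ∀ᶠ r in nhdsWithin s (Ioi s), leftStopped X u L r = X r := by
        filter_upwards [hIoo] with r hr
        simp only [leftStopped, if_pos hr.2]
      have h2 := (hX.2.1 s hs).congr' (hev.mono fun r h => h.symm)
      simpa only [leftStopped, if_pos hsu] using h2
    · have hev : ∀ᶠ r in nhdsWithin s (Ioi s), leftStopped X u L r = L := by
        filter_upwards [self_mem_nhdsWithin] with r hr
        simp only [leftStopped, if_neg (not_lt.2 (hsu.trans (le_of_lt hr)))]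
      have h2 := (tendsto_const_nhds : Tendsto (fun _ : ℝ => L) (nhdsWithin s (Ioi s))
        (nhds L)).congr' (hev.mono fun r h => h.symm)
      simpa only [leftStopped, if_neg (not_lt.2 hsu)] using h2
  · intro s hs
    rcases lt_trichotomy s u with hsu | hsu | hsu
    · obtain ⟨L', hL'U, hL'⟩ := hX.2.2 s hs
      refine ⟨L', hL'U, ?_⟩
      have hev : ∀ᶠ r in nhdsWithin s (Iio s), leftStopped X u L r = X r := by
        filter_upwards [self_mem_nhdsWithin] with r hr
        simp only [leftStopped, if_pos (lt_trans hr hsu)]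
      exact hL'.congr' (hev.mono fun r h => h.symm)
    · subst hsu
      refine ⟨L, hLU, ?_⟩
      have hev : ∀ᶠ r in nhdsWithin s (Iio s), leftStopped X s L r = X r := by
        filter_upwards [self_mem_nhdsWithin] with r hr
        simp only [leftStopped, if_pos (mem_Iio.mp hr)]
      exact hL.congr' (hev.mono fun r h => h.symm)
    · refine ⟨L, hLU, ?_⟩
      have hIoo : Ioo u s ∈ nhdsWithin s (Iio s) := by
        rw [mem_nhdsWithin]
        exact ⟨Ioi u, isOpen_Ioi, hsu, fun r hr => ⟨hr.1, hr.2⟩⟩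
      have hev : ∀ᶠ r in nhdsWithin s (Iio s), leftStopped X u L r = L := by
        filter_upwards [hIoo] with r hr
        simp only [leftStopped, if_neg (not_lt.2 (le_of_lt hr.1))]
      exact tendsto_const_nhds.congr' (hev.mono fun r h => h.symm)

/-- Right-continuity in time of a regular functional along a càdlàg path. -/
lemma right_time_cont {F : Fnl d m} (hna : NonAnticipative T U S F)
    (hcx : ContInXLocUnifT T U S F)
    (hhd : ∃ HD : Fin (m+1) → Fnl d m, HasHorizDeriv T U S F HD)
    {X : FPath d} (hX : IsCadlag T U X) {A : FPath m} (hA : IsCBV T S A)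
    {u : ℝ} (hu : u ∈ Ico (0:ℝ) T) :
    Tendsto (fun s => F s X A) (nhdsWithin u (Ioi u)) (nhds (F u X A)) := by
  obtain ⟨HD, hHD⟩ := hhd
  have huIcc : u ∈ Icc (0:ℝ) T := ⟨hu.1, hu.2.le⟩
  have hT0 : (0:ℝ) ≤ T := hu.1.trans hu.2.le
  set K := closure (X '' Icc 0 T) with hK
  have hKc : IsCompact K := (isBounded_image hX).isCompact_closure
  have hKU : K ⊆ U := closure_image_subset hX
  have hXK : IsCadlag T K X := cadlag_closure hX
  -- Jordan decompositions of the integrators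
  have hjor : ∀ i : Fin (m+1), ∃ pn : StieltjesFunction ℝ × StieltjesFunction ℝ,
      ∀ r ∈ Icc (0:ℝ) T, timeAug A r i = pn.1 r - pn.2 r := by
    intro i
    refine Fin.cases ?_ ?_ i
    · refine ⟨⟨StieltjesFunction.id, StieltjesFunction.const ℝ 0⟩, fun r hr => ?_⟩
      simp [timeAug, StieltjesFunction.id, StieltjesFunction.const]
    · intro k
      have hcont : ContinuousOn (fun t => A t k) (Icc 0 T) :=
        (continuous_apply k).comp_continuousOn hA.2.1
      obtain ⟨p, n, hpn⟩ := jordan_decomp hT0 hcont (hA.2.2 k)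
      refine ⟨⟨p, n⟩, fun r hr => ?_⟩
      simpa [timeAug] using hpn r hr
  choose pn hpn using hjor
  -- bounds on the horizontal derivatives
  have hbd : ∀ i : Fin (m+1), ∃ C : ℝ, ∀ t ∈ Icc (0:ℝ) T, ∀ Z, IsCadlag T K Z →
      |HD i t Z A| ≤ C := fun i => hHD.2.1 i A hA K hKU hKc
  choose C hC using hbd
  -- the modulus from the Jordan parts
  set M : ℝ → ℝ := fun s => ∑ i : Fin (m+1),
    (|C i| + 1) * (((pn i).1 s - (pn i).1 u) + ((pn i).2 s - (pn i).2 u)) with hM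
  have hM0 : Tendsto M (nhdsWithin u (Ici u)) (nhds 0) := by
    have h0 : (0:ℝ) = ∑ i : Fin (m+1), (|C i| + 1) * ((0:ℝ) + 0) := by simp
    rw [h0]
    refine tendsto_finset_sum _ fun i _ => Filter.Tendsto.const_mul _ (Filter.Tendsto.add ?_ ?_)
    · have := (pn i).1.right_continuous u
      have h2 : Tendsto (pn i).1 (nhdsWithin u (Ici u)) (nhds ((pn i).1 u)) := this
      simpa using h2.sub_const ((pn i).1 u)
    · have := (pn i).2.right_continuous u
      have h2 : Tendsto (pn i).2 (nhdsWithin u (Ici u)) (nhds ((pn i).2 u)) := this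
      simpa using h2.sub_const ((pn i).2 u)
  rw [Metric.tendsto_nhdsWithin_nhds]
  intro ε hε
  -- the fixed-time continuity modulus at the stopped path
  obtain ⟨η, hη, hP⟩ := hcx (ε/3) (by linarith) u huIcc (stopped X u) (stopped_cadlag hX huIcc)
    A hA
  -- right continuity of X at u
  have hXr := hX.2.1 u hu
  rw [Metric.tendsto_nhdsWithin_nhds] at hXr
  obtain ⟨δ₁, hδ₁, hXδ⟩ := hXr (η/2) (by linarith)
  -- smallness of the modulus
  have hM0' := hM0
  rw [Metric.tendsto_nhdsWithin_nhds] at hM0'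
  obtain ⟨δ₃, hδ₃, hMδ⟩ := hM0' (ε/3) (by linarith)
  refine ⟨min (min δ₁ δ₃) (min η (T - u)),
    lt_min (lt_min hδ₁ hδ₃) (lt_min hη (by linarith [hu.2])), ?_⟩
  intro s hsIoi hsd
  have hus : u < s := hsIoi
  have hsu : s - u < min (min δ₁ δ₃) (min η (T - u)) := by
    rw [Real.dist_eq, abs_of_pos (by linarith)] at hsd
    exact hsd
  have hsT : s ≤ T := by
    have := lt_of_lt_of_le hsu (le_trans (min_le_right _ _) (min_le_right _ _))
    linarith
  have hsIcc : s ∈ Icc (0:ℝ) T := ⟨by linarith [hu.1], hsT⟩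
  -- claim0 / claim1
  have claim0 : F u X A = F u (stopped X u) A := by
    rw [hna u huIcc X hX A hA, hna u huIcc (stopped X u) (stopped_cadlag hX huIcc) A hA,
      stopped_stopped]
  have claim1 : F s X A = F s (stopped X s) A := by
    rw [hna s hsIcc X hX A hA, hna s hsIcc (stopped X s) (stopped_cadlag hX hsIcc) A hA,
      stopped_stopped]
  -- T1 : fixed-time comparison
  have hsup : supDist T (stopped X u) (stopped X s) < η := by
    have hbound : ∀ w : Icc (0:ℝ) T, ‖stopped X u w.1 - stopped X s w.1‖ ≤ η/2 := by
      rintro ⟨w, hw⟩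
      simp only [stopped]
      rcases le_or_gt w u with hwu | hwu
      · rw [min_eq_right hwu, min_eq_right (hwu.trans hus.le), sub_self, norm_zero]
        linarith
      · rw [min_eq_left hwu.le]
        set r := min s w with hr
        have hru : u < r := lt_min hus hwu
        have hrd : dist r u < δ₁ := by
          rw [Real.dist_eq, abs_of_pos (by linarith)]
          have : r ≤ s := min_le_left _ _
          have h5 := lt_of_lt_of_le hsu (le_trans (min_le_left _ _) (min_le_left _ _))
          linarith
        have h9 := hXδ hru hrd
        rw [dist_comm] at h9
        calc ‖X u - X r‖ = dist (X u) (X r) := (dist_eq_norm _ _).symm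
          _ ≤ η/2 := h9.le
    calc supDist T (stopped X u) (stopped X s) ≤ η/2 := by
          refine Real.iSup_le (fun w => hbound w) (by linarith)
      _ < η := by linarith
  have hT1 : |F s (stopped X u) A - F s (stopped X s) A| < ε/3 := by
    refine hP s hsIcc (stopped X s) (stopped_cadlag hX hsIcc) hsup ?_
    rw [abs_sub_comm, abs_of_pos (by linarith : (0:ℝ) < s - u)]
    have h7 : min (min δ₁ δ₃) (min η (T - u)) ≤ η :=
      le_trans (min_le_right _ _) (min_le_left _ _)
    linarith
  -- T2 : horizontal increment
  obtain ⟨hmeas, I, hI, hsum⟩ := hHD.2.2 u s hu.1 hus hsT X hX A hA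
  have hT2 : |F s (stopped X u) A - F u (stopped X u) A| ≤ M s := by
    rw [hsum]
    calc |∑ i, I i| ≤ ∑ i, |I i| := Finset.abs_sum_le_sum_abs _ _
      _ ≤ ∑ i : Fin (m+1),
          (|C i| + 1) * (((pn i).1 s - (pn i).1 u) + ((pn i).2 s - (pn i).2 u)) := by
          refine Finset.sum_le_sum fun i _ => ?_
          obtain ⟨P, N, hPA, hiP, hiN, hIval⟩ := hI i
          have hrel : ∀ r ∈ Icc u s, P r - N r = (pn i).1 r - (pn i).2 r := by
            intro r hr
            have hrIcc : r ∈ Icc (0:ℝ) T := ⟨hu.1.trans hr.1, hr.2.trans hsT⟩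
            rw [← hPA r hr, ← hpn i r hrIcc]
          have hbound : ∀ r ∈ Ioc u s, |HD i r (stopped X u) A| ≤ |C i| + 1 := by
            intro r hr
            have hrIcc : r ∈ Icc (0:ℝ) T := ⟨hu.1.trans hr.1.le, hr.2.trans hsT⟩
            calc |HD i r (stopped X u) A| ≤ C i :=
                  hC i r hrIcc (stopped X u) (stopped_cadlag hXK huIcc)
              _ ≤ |C i| + 1 := by
                  have := le_abs_self (C i); linarith
          rw [hIval]
          exact stieltjes_interchange hus.le P N (pn i).1 (pn i).2 hrel (hmeas i) hbound hiP hiN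
  have hT2' : M s < ε/3 := by
    have := hMδ (mem_Ici.2 hus.le) (by
      rw [Real.dist_eq, abs_of_pos (by linarith : (0:ℝ) < s - u)]
      exact lt_of_lt_of_le hsu (le_trans (min_le_left _ _) (min_le_right _ _)))
    rw [Real.dist_eq, sub_zero] at this
    exact lt_of_le_of_lt (le_abs_self _) this
  -- combine
  rw [Real.dist_eq]
  calc |F s X A - F u X A|
      = |(F s (stopped X s) A - F s (stopped X u) A)
        + (F s (stopped X u) A - F u (stopped X u) A)| := by
        rw [claim0, claim1]; ring_nf
    _ ≤ |F s (stopped X s) A - F s (stopped X u) A|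
        + |F s (stopped X u) A - F u (stopped X u) A| := abs_add_le _ _
    _ < ε/3 + ε/3 := by
        have h6 : |F s (stopped X s) A - F s (stopped X u) A| < ε/3 := by
          rw [abs_sub_comm]; exact hT1
        exact add_lt_add_of_lt_of_le h6 (le_trans hT2 hT2'.le)
    _ < ε := by linarith

end CRSO
namespace CRSO

variable {d m : ℕ} {T : ℝ} {U : Set (Fin d → ℝ)} {S : Set (Fin m → ℝ)}

/-- Left limits in time of a regular functional along a càdlàg path. -/
lemma left_time_limit {F : Fnl d m} (hlc : LeftCont T U S F)
    {X : FPath d} (hX : IsCadlag T U X) {A : FPath m} (hA : IsCBV T S A)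
    {u : ℝ} (hu : u ∈ Ioc (0:ℝ) T) {L : Fin d → ℝ} (hLU : L ∈ U)
    (hL : Tendsto X (nhdsWithin u (Iio u)) (nhds L)) :
    Tendsto (fun s => F s X A) (nhdsWithin u (Iio u))
      (nhds (F u (leftStopped X u L) A)) := by
  have hX' : IsCadlag T U (leftStopped X u L) := leftStopped_cadlag hX hu hLU hL
  rw [Metric.tendsto_nhdsWithin_nhds]
  intro ε hε
  obtain ⟨η, hη, hQ⟩ := hlc u hu ε hε (leftStopped X u L) hX' A hA
  have hL' := hL
  rw [Metric.tendsto_nhdsWithin_nhds] at hL'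
  obtain ⟨δ₂, hδ₂, hXδ⟩ := hL' (η/3) (by linarith)
  refine ⟨min η δ₂, lt_min hη hδ₂, ?_⟩
  intro s hsIio hsd
  have hsu : s < u := hsIio
  have hsd' : u - s < min η δ₂ := by
    rw [Real.dist_eq, abs_of_neg (by linarith)] at hsd
    linarith [hsd]
  have hXnear : ∀ r, s ≤ r → r < u → dist (X r) L < η/3 := by
    intro r hsr hru
    refine hXδ hru ?_
    rw [Real.dist_eq, abs_of_neg (by linarith)]
    have h5 : min η δ₂ ≤ δ₂ := min_le_right _ _
    linarith
  have hsup : supDist T (stopped (leftStopped X u L) u) (stopped X s) < η := by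
    have hbound : ∀ w : Icc (0:ℝ) T,
        ‖stopped (leftStopped X u L) u w.1 - stopped X s w.1‖ ≤ 2*η/3 := by
      rintro ⟨w, hw⟩
      simp only [stopped, leftStopped]
      rcases lt_or_ge w s with hws | hws
      · rw [min_eq_right (le_of_lt (hws.trans hsu)), min_eq_right hws.le, if_pos (hws.trans hsu)]
        rw [sub_self, norm_zero]; linarith
      · rw [min_eq_left hws]
        rcases lt_or_ge w u with hwu | hwu
        · rw [min_eq_right hwu.le, if_pos hwu]
          have h1 := hXnear w hws hwu
          have h2 := hXnear s (le_refl s) hsu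
          calc ‖X w - X s‖ = dist (X w) (X s) := (dist_eq_norm _ _).symm
            _ ≤ dist (X w) L + dist L (X s) := dist_triangle _ _ _
            _ ≤ η/3 + η/3 := by
                rw [dist_comm L (X s)]
                exact add_le_add h1.le h2.le
            _ ≤ 2*η/3 := by linarith
        · rw [min_eq_left hwu, if_neg (lt_irrefl u)]
          have h2 := hXnear s (le_refl s) hsu
          calc ‖L - X s‖ = dist L (X s) := (dist_eq_norm _ _).symm
            _ ≤ 2*η/3 := by rw [dist_comm]; linarith [h2.le]
    calc supDist T (stopped (leftStopped X u L) u) (stopped X s) ≤ 2*η/3 :=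
          Real.iSup_le (fun w => hbound w) (by linarith)
      _ < η := by linarith
  have hmem : u - s ∈ Ico (0:ℝ) η := ⟨by linarith, by
    have : min η δ₂ ≤ η := min_le_left _ _
    linarith⟩
  have := hQ (u - s) hmem X hX (by
    have : u - (u - s) = s := by ring
    rw [this]
    exact hsup)
  rw [Real.dist_eq, abs_sub_comm]
  have heq : u - (u - s) = s := by ring
  rw [heq] at this
  exact this

/-- The inner path `u ↦ (F ℓ (u, X, A))_ℓ` is càdlàg with values in `V`. -/
lemma inner_path_cadlag {ν : ℕ} {V : Set (Fin ν → ℝ)}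
    (F : Fin ν → Fnl d m) (hF : ∀ ℓ, C12c T U S (F ℓ))
    (hFV : ∀ t ∈ Icc (0:ℝ) T, ∀ X, IsCadlag T U X → ∀ A, IsCBV T S A →
      (fun ℓ => F ℓ t X A) ∈ V)
    {X : FPath d} (hX : IsCadlag T U X) {A : FPath m} (hA : IsCBV T S A) :
    IsCadlag T V (fun u ℓ => F ℓ u X A) := by
  refine ⟨fun t ht => hFV t ht X hX A hA, ?_, ?_⟩
  · intro u hu
    rw [tendsto_pi_nhds]
    intro ℓ
    exact right_time_cont (hF ℓ).1.nonanticip (hF ℓ).2.1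
      (by obtain ⟨HD, hHD, _⟩ := (hF ℓ).1.horiz; exact ⟨HD, hHD⟩) hX hA hu
  · intro u hu
    obtain ⟨L, hLU, hL⟩ := hX.2.2 u hu
    refine ⟨(fun ℓ => F ℓ u (leftStopped X u L) A),
      hFV u ⟨hu.1.le, hu.2⟩ _ (leftStopped_cadlag hX hu hLU hL) A hA, ?_⟩
    rw [tendsto_pi_nhds]
    intro ℓ
    exact left_time_limit (hF ℓ).1.leftCont hX hA hu hLU hL

end CRSO
namespace CRSO

lemma vertPerturb_zero {d : ℕ} (t : ℝ) (X : FPath d) : vertPerturb t X 0 = X := by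
  funext s
  simp [vertPerturb]

lemma vertD2_eq {d m : ℕ} (F : Fnl d m) (t : ℝ) (X : FPath d) (A : FPath m) (i j : Fin d) :
    vertD2 F t X A i j
      = fderiv ℝ (fun v => fderiv ℝ (fun w => F t (vertPerturb t X w) A) v (Pi.single j 1)) 0
          (Pi.single i 1) := by
  have h1 : (fun v => vertD F t (vertPerturb t X v) A j)
      = fun v => fderiv ℝ (fun w => F t (vertPerturb t X w) A) v (Pi.single j 1) :=
    funext fun v => congrFun (vertD_perturb F t X A v) j
  show fderiv ℝ (fun v => vertD F t (vertPerturb t X v) A j) 0 (Pi.single i 1) = _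
  rw [h1]

variable {T : ℝ}

lemma fstPath_CBV {m p : ℕ} {S : Set (Fin m → ℝ)} {W : Set (Fin p → ℝ)} {AB : FPath (m+p)}
    (h : IsCBV T (pairSet S W) AB) : IsCBV T S (fstPath AB) := by
  refine ⟨fun t ht => (h.1 t ht).1, ?_, fun i => h.2.2 (Fin.castAdd p i)⟩
  rw [continuousOn_pi]
  intro i
  exact (continuous_apply (Fin.castAdd p i)).comp_continuousOn h.2.1

lemma sndPath_CBV {m p : ℕ} {S : Set (Fin m → ℝ)} {W : Set (Fin p → ℝ)} {AB : FPath (m+p)}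
    (h : IsCBV T (pairSet S W) AB) : IsCBV T W (sndPath AB) := by
  refine ⟨fun t ht => (h.1 t ht).2, ?_, fun i => h.2.2 (Fin.natAdd m i)⟩
  rw [continuousOn_pi]
  intro i
  exact (continuous_apply (Fin.natAdd m i)).comp_continuousOn h.2.1

lemma stopped_CBV {m : ℕ} {S : Set (Fin m → ℝ)} {A : FPath m} (hA : IsCBV T S A)
    {t : ℝ} (ht : t ∈ Icc (0:ℝ) T) : IsCBV T S (stopped A t) := by
  have hmap : MapsTo (fun s => min t s) (Icc (0:ℝ) T) (Icc (0:ℝ) T) := by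
    intro s hs
    exact ⟨le_min ht.1 hs.1, (min_le_left _ _).trans ht.2⟩
  refine ⟨fun s hs => hA.1 _ (hmap hs), ?_, ?_⟩
  · exact hA.2.1.comp ((continuous_const.min continuous_id).continuousOn) hmap
  · intro i
    have hmono : MonotoneOn (fun s => min t s) (Icc (0:ℝ) T) :=
      fun x _ y _ hxy => min_le_min (le_refl t) hxy
    have hle := eVariationOn.comp_le_of_monotoneOn (fun r => A r i) _ hmono hmap
    intro htop
    exact (hA.2.2 i) (le_antisymm le_top (htop ▸ hle))

end CRSO

/-- **Lemma 3.4 (chain rule): second-order vertical derivatives.**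
`∂_{ji}H = Σ_ℓ ( Σ_k ∂_{ℓk}G ∂_iF_ℓ ∂_jF_k + ∂_ℓG ∂_{ji}F_ℓ )`. -/
theorem chain_rule_second_order
    {d ν m p : ℕ} {T : ℝ} (hT : 0 < T)
    {U : Set (Fin d → ℝ)} (hU : IsOpen U) {V : Set (Fin ν → ℝ)} (hV : IsOpen V)
    {S : Set (Fin m → ℝ)} (hS : IsOpen S) {W : Set (Fin p → ℝ)} (hW : IsOpen W)
    (F : Fin ν → Fnl d m) (hF : ∀ ℓ, C12c T U S (F ℓ))
    (hFV : ∀ t ∈ Set.Icc (0:ℝ) T, ∀ X, IsCadlag T U X → ∀ A, IsCBV T S A →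
      (fun ℓ => F ℓ t X A) ∈ V)
    (G : Fnl ν p) (hG : C12c T V W G) :
    ∀ t ∈ Set.Icc (0:ℝ) T, ∀ X, IsCadlag T U X →
    ∀ AB, IsCBV T (pairSet S W) AB → ∀ i j : Fin d,
      vertD2 (fun t' X' AB' => G t' (fun u ℓ => F ℓ u X' (fstPath AB')) (sndPath AB'))
          t X AB j i
        = ∑ ℓ,
            ((∑ k, vertD2 G t (fun u ℓ' => F ℓ' u X (fstPath AB)) (sndPath AB) ℓ k
                * vertD (F ℓ) t X (fstPath AB) i * vertD (F k) t X (fstPath AB) j)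
             + vertD G t (fun u ℓ' => F ℓ' u X (fstPath AB)) (sndPath AB) ℓ
                * vertD2 (F ℓ) t X (fstPath AB) j i) := by
  intro t ht X hX AB hAB i j
  have hA : IsCBV T S (fstPath AB) := CRSO.fstPath_CBV hAB
  have hB : IsCBV T W (sndPath AB) := CRSO.sndPath_CBV hAB
  set Y : FPath ν := fun u ℓ => F ℓ u X (fstPath AB) with hYdef
  have hY : IsCadlag T V Y := CRSO.inner_path_cadlag F hF hFV hX hA
  obtain ⟨δ₀, hδ₀, hXv⟩ := CRSO.vertPerturb_cadlag_family hU hX t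
  obtain ⟨δ', hδ', hYv⟩ := CRSO.vertPerturb_cadlag_family hV hY t
  set f : (Fin d → ℝ) → (Fin ν → ℝ) :=
    fun v ℓ => F ℓ t (vertPerturb t X v) (fstPath AB) with hfdef
  set g : (Fin ν → ℝ) → ℝ := fun y => G t (vertPerturb t Y y) (sndPath AB) with hgdef
  set φ : (Fin d → ℝ) → ℝ :=
    fun v => G t (fun u ℓ => F ℓ u (vertPerturb t X v) (fstPath AB)) (sndPath AB) with hφdef
  -- differentiability of f on the ball
  have hf1 : ∀ v ∈ Metric.ball (0 : Fin d → ℝ) δ₀, DifferentiableAt ℝ f v := by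
    intro v hv
    rw [mem_ball_zero_iff] at hv
    refine differentiableAt_pi.2 fun ℓ => ?_
    have h1 : DifferentiableAt ℝ
        (fun w => F ℓ t (vertPerturb t (vertPerturb t X v) w) (fstPath AB)) 0 :=
      (hF ℓ).1.vdiff t ht (vertPerturb t X v) (hXv v hv) (fstPath AB) hA
    have h2 : (fun w => F ℓ t (vertPerturb t (vertPerturb t X v) w) (fstPath AB))
        = fun w => f (v + w) ℓ := by
      funext w; rw [CRSO.vertPerturb_vertPerturb]
    rw [h2] at h1
    exact CRSO.differentiableAt_shift h1
  have hf2 : ∀ (ℓ : Fin ν) (i' : Fin d),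
      DifferentiableAt ℝ (fun v => fderiv ℝ (fun v' => f v' ℓ) v (Pi.single i' 1)) 0 := by
    intro ℓ i'
    have h1 : DifferentiableAt ℝ
        (fun v => vertD (F ℓ) t (vertPerturb t X v) (fstPath AB) i') 0 :=
      (hF ℓ).1.vdiff2 i' t ht X hX (fstPath AB) hA
    have h2 : (fun v => vertD (F ℓ) t (vertPerturb t X v) (fstPath AB) i')
        = fun v => fderiv ℝ (fun v' => f v' ℓ) v (Pi.single i' 1) :=
      funext fun v => congrFun (CRSO.vertD_perturb (F ℓ) t X (fstPath AB) v) i'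
    rwa [h2] at h1
  have hg1 : ∀ y ∈ Metric.ball (0 : Fin ν → ℝ) δ', DifferentiableAt ℝ g y := by
    intro y hy
    rw [mem_ball_zero_iff] at hy
    have h1 : DifferentiableAt ℝ
        (fun w => G t (vertPerturb t (vertPerturb t Y y) w) (sndPath AB)) 0 :=
      hG.1.vdiff t ht (vertPerturb t Y y) (hYv y hy) (sndPath AB) hB
    have h2 : (fun w => G t (vertPerturb t (vertPerturb t Y y) w) (sndPath AB))
        = fun w => g (y + w) := by
      funext w; rw [CRSO.vertPerturb_vertPerturb]
    rw [h2] at h1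
    exact CRSO.differentiableAt_shift h1
  have hg2 : ∀ k : Fin ν,
      DifferentiableAt ℝ (fun y => fderiv ℝ g y (Pi.single k 1)) 0 := by
    intro k
    have h1 : DifferentiableAt ℝ
        (fun y => vertD G t (vertPerturb t Y y) (sndPath AB) k) 0 :=
      hG.1.vdiff2 k t ht Y hY (sndPath AB) hB
    have h2 : (fun y => vertD G t (vertPerturb t Y y) (sndPath AB) k)
        = fun y => fderiv ℝ g y (Pi.single k 1) :=
      funext fun y => congrFun (CRSO.vertD_perturb G t Y (sndPath AB) y) k
    rwa [h2] at h1
  -- continuity of f at 0, choice of δ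
  have hc := (hf1 0 (Metric.mem_ball_self hδ₀)).continuousAt
  rw [Metric.continuousAt_iff] at hc
  obtain ⟨δ₁, hδ₁, hcball⟩ := hc δ' hδ'
  set δ : ℝ := min δ₀ δ₁ with hδdef
  have hδ : 0 < δ := lt_min hδ₀ hδ₁
  have hmap : ∀ v ∈ Metric.ball (0 : Fin d → ℝ) δ,
      f v - f 0 ∈ Metric.ball (0 : Fin ν → ℝ) δ' := by
    intro v hv
    rw [mem_ball_zero_iff]
    rw [Metric.mem_ball] at hv
    have h1 := hcball (lt_of_lt_of_le hv (min_le_right _ _))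
    rwa [dist_eq_norm] at h1
  have hf1' : ∀ v ∈ Metric.ball (0 : Fin d → ℝ) δ, DifferentiableAt ℝ f v :=
    fun v hv => hf1 v (Metric.ball_subset_ball (min_le_left _ _) hv)
  -- the key composition identity
  have hφeq : ∀ v ∈ Metric.ball (0 : Fin d → ℝ) δ, φ v = g (f v - f 0) := by
    intro v hv
    have hv₀ : ‖v‖ < δ₀ := by
      rw [mem_ball_zero_iff] at hv
      exact lt_of_lt_of_le hv (min_le_left _ _)
    have hvy : ‖f v - f 0‖ < δ' := by
      have := hmap v hv
      rwa [mem_ball_zero_iff] at this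
    have hXvc : IsCadlag T U (vertPerturb t X v) := hXv v hv₀
    have hYvc : IsCadlag T V (fun u ℓ => F ℓ u (vertPerturb t X v) (fstPath AB)) :=
      CRSO.inner_path_cadlag F hF hFV hXvc hA
    have hZc : IsCadlag T V (vertPerturb t Y (f v - f 0)) := hYv _ hvy
    have step1 : φ v = G t (stopped (fun u ℓ => F ℓ u (vertPerturb t X v) (fstPath AB)) t)
        (stopped (sndPath AB) t) :=
      hG.1.nonanticip t ht _ hYvc (sndPath AB) hB
    have step2 : g (f v - f 0) = G t (stopped (vertPerturb t Y (f v - f 0)) t)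
        (stopped (sndPath AB) t) :=
      hG.1.nonanticip t ht _ hZc (sndPath AB) hB
    have heqOn : ∀ s ∈ Icc (0:ℝ) T,
        stopped (fun u ℓ => F ℓ u (vertPerturb t X v) (fstPath AB)) t s
          = stopped (vertPerturb t Y (f v - f 0)) t s := by
      intro s hs
      funext ℓ
      simp only [stopped]
      rcases le_or_gt t s with hts | hts
      · rw [min_eq_left hts]
        simp only [vertPerturb, le_refl, if_pos]
        show f v ℓ = (Y t + (f v - f 0)) ℓ
        have hY0 : Y t ℓ = f 0 ℓ := by
          show F ℓ t X (fstPath AB) = f 0 ℓ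
          have : f 0 ℓ = F ℓ t (vertPerturb t X 0) (fstPath AB) := rfl
          rw [this, CRSO.vertPerturb_zero]
        simp only [Pi.add_apply, Pi.sub_apply, hY0]
        ring
      · rw [min_eq_right hts.le]
        have hsIcc : s ∈ Icc (0:ℝ) T := ⟨hs.1, hs.2⟩
        have hstop : stopped (vertPerturb t X v) s = stopped X s := by
          funext r
          simp only [stopped, vertPerturb]
          rw [if_neg (not_le.2 (lt_of_le_of_lt (min_le_left s r) hts))]
        have ha := (hF ℓ).1.nonanticip s hsIcc (vertPerturb t X v) hXvc (fstPath AB) hA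
        have hb := (hF ℓ).1.nonanticip s hsIcc X hX (fstPath AB) hA
        have hval : F ℓ s (vertPerturb t X v) (fstPath AB) = F ℓ s X (fstPath AB) := by
          rw [ha, hb, hstop]
        simp only [vertPerturb, if_neg (not_le.2 hts)]
        exact hval
    have step3 : G t (stopped (fun u ℓ => F ℓ u (vertPerturb t X v) (fstPath AB)) t)
        (stopped (sndPath AB) t)
        = G t (stopped (vertPerturb t Y (f v - f 0)) t) (stopped (sndPath AB) t) :=
      CRSO.eq_of_eqOn_Icc hT.le hG.2.1 ht (CRSO.stopped_cadlag hYvc ht)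
        (CRSO.stopped_cadlag hZc ht) (CRSO.stopped_CBV hB ht) heqOn
    rw [step1, step3, ← step2]
  have main := CRSO.calc_core hδ hδ' hf1' hf2 hg1 hg2 hmap hφeq i j
  -- translate the goal
  have hL : vertD2 (fun t' X' AB' => G t' (fun u ℓ => F ℓ u X' (fstPath AB')) (sndPath AB'))
      t X AB j i
      = fderiv ℝ (fun v => fderiv ℝ φ v (Pi.single i 1)) 0 (Pi.single j 1) := by
    rw [CRSO.vertD2_eq]
  rw [hL, main]
  refine Finset.sum_congr rfl fun ℓ _ => ?_
  congr 1
  · refine Finset.sum_congr rfl fun k _ => ?_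
    rw [CRSO.vertD2_eq G t Y (sndPath AB) ℓ k]
    rfl
  · rw [CRSO.vertD2_eq (F ℓ) t X (fstPath AB) j i]
    rfl
end
end

section
/- Symmetry of second vertical derivatives: Let F∈ℂ^{1,2}_b(U,S). Then for every (t,X,A)∈[0,T]×D([0,T],U)×CBV([0,T],S) and all i,j=1,…,d, the second vertical partial derivatives are symmetric: ∂_{ij}F(t,X,A) = ∂_{ji}F(t,X,A). -/
open Filter Set MeasureTheory

section Aux
variable {E G : Type*} [NormedAddCommGroup E] [NormedSpace ℝ E]
  [NormedAddCommGroup G] [NormedSpace ℝ G]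

/-- Translation invariance of the Fréchet derivative. -/
lemma fderiv_shift0 (f : E → G) (w : E) :
    fderiv ℝ (fun v => f (w + v)) 0 = fderiv ℝ f w := by
  by_cases h : DifferentiableAt ℝ f w
  · have h1 : HasFDerivAt (fun v : E => w + v) (ContinuousLinearMap.id ℝ E) 0 := by
      simpa using (hasFDerivAt_id (0 : E)).const_add w
    have h2 : HasFDerivAt f (fderiv ℝ f w) ((fun v : E => w + v) 0) := by
      simpa using h.hasFDerivAt
    have h3 := h2.comp 0 h1
    simpa [Function.comp_def] using h3.fderiv
  · have h' : ¬ DifferentiableAt ℝ (fun v => f (w + v)) 0 := by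
      intro hc
      apply h
      have h1 : DifferentiableAt ℝ (fun u : E => u - w) w :=
        differentiableAt_id.sub_const w
      have h2 : DifferentiableAt ℝ (fun v => f (w + v)) ((fun u : E => u - w) w) := by
        simpa using hc
      have h3 : DifferentiableAt ℝ ((fun v => f (w + v)) ∘ (fun u : E => u - w)) w :=
        DifferentiableAt.comp w h2 h1
      have h4 : ((fun v => f (w + v)) ∘ fun u : E => u - w) = f := by
        funext u; simp [Function.comp]
      rwa [h4] at h3
    rw [fderiv_zero_of_not_differentiableAt h, fderiv_zero_of_not_differentiableAt h']
end Aux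

section Aux2
variable {d : ℕ}

/-- Any continuous linear functional on `Fin d → ℝ` is determined by basis values. -/
lemma clm_eq_sum (T : (Fin d → ℝ) →L[ℝ] ℝ) (x : Fin d → ℝ) :
    T x = ∑ k, x k * T (Pi.single k 1) := by
  conv_lhs => rw [← Finset.univ_sum_single x, map_sum]
  refine Finset.sum_congr rfl fun k _ => ?_
  have h : (Pi.single k (x k) : Fin d → ℝ) = x k • (Pi.single k 1 : Fin d → ℝ) := by
    rw [← Pi.single_smul, smul_eq_mul, mul_one]
  rw [h, T.map_smul, smul_eq_mul]
end Aux2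

/-- **Symmetry of second vertical derivatives** (Remark 2.3): for `F ∈ ℂ^{1,2}_b(U,S)`,
`∂_{ij}F(t,X,A) = ∂_{ji}F(t,X,A)`. -/
theorem vertD2_symm
    {d m : ℕ} {T : ℝ} (hT : 0 < T)
    {U : Set (Fin d → ℝ)} (hU : IsOpen U) {S : Set (Fin m → ℝ)} (hS : IsOpen S)
    (F : Fnl d m) (hF : C12b T U S F)
    (t : ℝ) (ht : t ∈ Set.Icc (0:ℝ) T)
    (X : FPath d) (hX : IsCadlag T U X) (A : FPath m) (hA : IsCBV T S A)
    (i j : Fin d) :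
    vertD2 F t X A i j = vertD2 F t X A j i := by
  classical
  -- the left-limit function, chosen once and for all
  have hXleft := hX.2.2
  set Llim : ℝ → (Fin d → ℝ) := fun s =>
    if h : s ∈ Set.Ioc (0:ℝ) T then (hXleft s h).choose else X 0 with hLdef
  have hLlim : ∀ s ∈ Set.Ioc (0:ℝ) T,
      Llim s ∈ U ∧ Tendsto X (nhdsWithin s (Set.Iio s)) (nhds (Llim s)) := by
    intro s hs
    have := (hXleft s hs).choose_spec
    simp only [hLdef, dif_pos hs]
    exact ⟨this.1, this.2⟩
  set M : Set (Fin d → ℝ) := X '' Set.Icc 0 T ∪ Llim '' Set.Ioc 0 T with hMdef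
  -- key subsequence extraction lemma
  have key : ∀ u : ℕ → ℝ, (∀ n, u n ∈ Set.Icc (0:ℝ) T) →
      ∃ q ∈ M, ∃ φ : ℕ → ℕ, StrictMono φ ∧
        Tendsto (fun n => X (u (φ n))) atTop (nhds q) := by
    intro u hu
    obtain ⟨t₀, ht₀, ψ, hψ, hψt⟩ := isCompact_Icc.tendsto_subseq hu
    by_cases hfr : ∃ᶠ n in atTop, u (ψ n) < t₀
    · obtain ⟨ρ, hρ, hρlt⟩ := Filter.extraction_of_frequently_atTop hfr
      have ht₀pos : 0 < t₀ := lt_of_le_of_lt (hu (ψ (ρ 0))).1 (hρlt 0)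
      have ht₀Ioc : t₀ ∈ Set.Ioc (0:ℝ) T := ⟨ht₀pos, ht₀.2⟩
      refine ⟨Llim t₀, Or.inr ⟨t₀, ht₀Ioc, rfl⟩, ψ ∘ ρ, hψ.comp hρ, ?_⟩
      have htend : Tendsto (fun n => u (ψ (ρ n))) atTop (nhdsWithin t₀ (Set.Iio t₀)) := by
        rw [tendsto_nhdsWithin_iff]
        exact ⟨hψt.comp hρ.tendsto_atTop, Filter.Eventually.of_forall hρlt⟩
      exact ((hLlim t₀ ht₀Ioc).2).comp htend
    · by_cases hfr2 : ∃ᶠ n in atTop, t₀ < u (ψ n)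
      · obtain ⟨ρ, hρ, hρlt⟩ := Filter.extraction_of_frequently_atTop hfr2
        have ht₀lt : t₀ < T := lt_of_lt_of_le (hρlt 0) (hu (ψ (ρ 0))).2
        have ht₀Ico : t₀ ∈ Set.Ico (0:ℝ) T := ⟨ht₀.1, ht₀lt⟩
        refine ⟨X t₀, Or.inl ⟨t₀, ht₀, rfl⟩, ψ ∘ ρ, hψ.comp hρ, ?_⟩
        have htend : Tendsto (fun n => u (ψ (ρ n))) atTop (nhdsWithin t₀ (Set.Ioi t₀)) := by
          rw [tendsto_nhdsWithin_iff]
          exact ⟨hψt.comp hρ.tendsto_atTop, Filter.Eventually.of_forall hρlt⟩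
        exact (hX.2.1 t₀ ht₀Ico).comp htend
      · refine ⟨X t₀, Or.inl ⟨t₀, ht₀, rfl⟩, ψ, hψ, ?_⟩
        have h1 : ∀ᶠ n in atTop, t₀ ≤ u (ψ n) := by
          simpa using (Filter.not_frequently.mp hfr)
        have h2 : ∀ᶠ n in atTop, u (ψ n) ≤ t₀ := by
          simpa using (Filter.not_frequently.mp hfr2)
        have heq : (fun n => X (u (ψ n))) =ᶠ[atTop] fun _ => X t₀ := by
          filter_upwards [h1, h2] with n hn1 hn2
          rw [le_antisymm hn2 hn1]
        exact Tendsto.congr' heq.symm tendsto_const_nhds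
  -- M is compact
  have hMseq : IsSeqCompact M := by
    intro p hp
    have hs : ∀ n : ℕ, ∃ s ∈ Set.Icc (0:ℝ) T, dist (X s) (p n) < 1/((n:ℝ)+1) := by
      intro n
      have hpos : (0:ℝ) < 1/((n:ℝ)+1) := by positivity
      rcases hp n with ⟨s, hsmem, hseq⟩ | ⟨s, hsmem, hseq⟩
      · exact ⟨s, hsmem, by rw [hseq]; simpa using hpos⟩
      · rw [← hseq]
        have h2 := (hLlim s hsmem).2
        have hev1 : ∀ᶠ r in nhdsWithin s (Set.Iio s), dist (X r) (Llim s) < 1/((n:ℝ)+1) :=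
          h2 (Metric.ball_mem_nhds _ hpos)
        have hev2 : ∀ᶠ r in nhdsWithin s (Set.Iio s), r ∈ Set.Ioi (0:ℝ) :=
          mem_nhdsWithin_of_mem_nhds (Ioi_mem_nhds hsmem.1)
        have hev3 : ∀ᶠ r in nhdsWithin s (Set.Iio s), r ∈ Set.Iio s :=
          eventually_mem_nhdsWithin
        obtain ⟨r, hr1, hr2, hr3⟩ := (hev1.and (hev2.and hev3)).exists
        exact ⟨r, ⟨le_of_lt hr2, le_trans (le_of_lt hr3) hsmem.2⟩, hr1⟩
    choose sfun hsmem hsdist using hs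
    obtain ⟨q, hq, φ, hφ, hconv⟩ := key sfun hsmem
    refine ⟨q, hq, φ, hφ, ?_⟩
    rw [tendsto_iff_dist_tendsto_zero]
    have hle : ∀ n, dist (p (φ n)) q ≤ 1/((φ n:ℝ)+1) + dist (X (sfun (φ n))) q := by
      intro n
      calc dist (p (φ n)) q ≤ dist (p (φ n)) (X (sfun (φ n))) + dist (X (sfun (φ n))) q :=
            dist_triangle _ _ _
        _ ≤ 1/((φ n:ℝ)+1) + dist (X (sfun (φ n))) q := by
            have := hsdist (φ n)
            rw [dist_comm] at this
            linarith
    have hlim : Tendsto (fun n => 1/((φ n:ℝ)+1) + dist (X (sfun (φ n))) q) atTop (nhds 0) := by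
      have l1 : Tendsto (fun n => 1/((φ n:ℝ)+1)) atTop (nhds 0) :=
        tendsto_one_div_add_atTop_nhds_zero_nat.comp hφ.tendsto_atTop
      have l2 : Tendsto (fun n => dist (X (sfun (φ n))) q) atTop (nhds 0) :=
        tendsto_iff_dist_tendsto_zero.mp hconv
      simpa using l1.add l2
    exact squeeze_zero (fun n => dist_nonneg) hle hlim
  have hMcomp : IsCompact M := hMseq.isCompact
  have hMU : M ⊆ U := by
    rintro p (⟨s, hsmem, rfl⟩ | ⟨s, hsmem, rfl⟩)
    exacts [hX.1 s hsmem, (hLlim s hsmem).1]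
  obtain ⟨δ, hδ, hthick⟩ := hMcomp.exists_thickening_subset_open hU hMU
  have hwU : ∀ w : Fin d → ℝ, ‖w‖ < δ → ∀ p ∈ M, p + w ∈ U := by
    intro w hw p hp
    apply hthick
    rw [Metric.mem_thickening_iff]
    refine ⟨p, hp, ?_⟩
    rw [dist_comm, dist_self_add_right]
    exact hw
  -- the perturbed path is cadlag with values in U
  have hpert : ∀ w : Fin d → ℝ, ‖w‖ < δ → IsCadlag T U (vertPerturb t X w) := by
    intro w hw
    refine ⟨?_, ?_, ?_⟩
    · intro s hsmem
      by_cases h : t ≤ s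
      · simpa [vertPerturb, h] using hwU w hw _ (Or.inl ⟨s, hsmem, rfl⟩)
      · simpa [vertPerturb, h] using hX.1 s hsmem
    · intro s hsmem
      by_cases h : t ≤ s
      · have hval : vertPerturb t X w s = X s + w := by simp [vertPerturb, h]
        rw [hval]
        refine Tendsto.congr' ?_ ((hX.2.1 s hsmem).add_const w)
        filter_upwards [eventually_mem_nhdsWithin] with r hr
        have : t ≤ r := le_trans h (le_of_lt hr)
        simp [vertPerturb, this]
      · push_neg at h
        have hval : vertPerturb t X w s = X s := by simp [vertPerturb, not_le.mpr h]
        rw [hval]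
        refine Tendsto.congr' ?_ (hX.2.1 s hsmem)
        filter_upwards [mem_nhdsWithin_of_mem_nhds (Iio_mem_nhds h)] with r hr
        simp [vertPerturb, not_le.mpr (show r < t from hr)]
    · intro s hsmem
      by_cases h : t < s
      · refine ⟨Llim s + w, hwU w hw _ (Or.inr ⟨s, hsmem, rfl⟩), ?_⟩
        refine Tendsto.congr' ?_ (((hLlim s hsmem).2).add_const w)
        filter_upwards [mem_nhdsWithin_of_mem_nhds (Ioi_mem_nhds h)] with r hr
        simp [vertPerturb, le_of_lt (show t < r from hr)]
      · push_neg at h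
        refine ⟨Llim s, (hLlim s hsmem).1, ?_⟩
        refine Tendsto.congr' ?_ ((hLlim s hsmem).2)
        filter_upwards [eventually_mem_nhdsWithin] with r hr
        have : ¬ t ≤ r := not_le.mpr (lt_of_lt_of_le hr h)
        simp [vertPerturb, this]
  -- the finite-dimensional function whose Hessian we study
  set f : (Fin d → ℝ) → ℝ := fun w => F t (vertPerturb t X w) A with hfdef
  have hshift : ∀ w v : Fin d → ℝ,
      vertPerturb t (vertPerturb t X w) v = vertPerturb t X (w + v) := by
    intro w v
    funext s
    by_cases h : t ≤ s <;> simp [vertPerturb, h, add_assoc]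
  have hfun : ∀ w : Fin d → ℝ,
      (fun v => F t (vertPerturb t (vertPerturb t X w) v) A) = fun v => f (w + v) := by
    intro w; funext v; rw [hshift]
  -- differentiability of f on the ball
  have hdiff : ∀ w : Fin d → ℝ, ‖w‖ < δ → DifferentiableAt ℝ f w := by
    intro w hw
    have h0 := hF.vdiff t ht (vertPerturb t X w) (hpert w hw) A hA
    unfold VertDiffAt at h0
    rw [hfun w] at h0
    have h1 : DifferentiableAt ℝ (fun u : Fin d → ℝ => u - w) w :=
      differentiableAt_id.sub_const w
    have h2 : DifferentiableAt ℝ (fun v => f (w + v)) ((fun u : Fin d → ℝ => u - w) w) := by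
      simpa using h0
    have h3 : DifferentiableAt ℝ ((fun v => f (w + v)) ∘ (fun u : Fin d → ℝ => u - w)) w :=
      DifferentiableAt.comp w h2 h1
    have h4 : ((fun v => f (w + v)) ∘ fun u : Fin d → ℝ => u - w) = f := by
      funext u; simp [Function.comp]
    rwa [h4] at h3
  -- the vertical derivative along perturbed paths is the gradient of f
  have hfderiv_eq : ∀ w : Fin d → ℝ,
      vertD F t (vertPerturb t X w) A = fun k => fderiv ℝ f w (Pi.single k 1) := by
    intro w
    funext k
    unfold vertD
    rw [hfun w, fderiv_shift0]
  -- eventual differentiability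
  have hev : ∀ᶠ y in nhds (0 : Fin d → ℝ), HasFDerivAt f (fderiv ℝ f y) y := by
    filter_upwards [Metric.ball_mem_nhds (0 : Fin d → ℝ) hδ] with y hy
    exact (hdiff y (by simpa using mem_ball_zero_iff.mp hy)).hasFDerivAt
  -- differentiability of the derivative at 0
  have hcomps : ∀ k : Fin d, DifferentiableAt ℝ (fun w => fderiv ℝ f w (Pi.single k 1)) 0 := by
    intro k
    have h0 := hF.vdiff2 k t ht X hX A hA
    unfold VertDiffAt at h0
    have h1 : (fun v => vertD F t (vertPerturb t X v) A k)
        = fun v => fderiv ℝ f v (Pi.single k 1) := by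
      funext v; exact congrFun (hfderiv_eq v) k
    rwa [h1] at h0
  set Λ : (Fin d → ℝ) →L[ℝ] ((Fin d → ℝ) →L[ℝ] ℝ) :=
    ∑ k, (ContinuousLinearMap.proj k : (Fin d → ℝ) →L[ℝ] ℝ).smulRight
      (ContinuousLinearMap.proj k : (Fin d → ℝ) →L[ℝ] ℝ) with hΛdef
  have hΛ : ∀ T' : (Fin d → ℝ) →L[ℝ] ℝ, Λ (fun k => T' (Pi.single k 1)) = T' := by
    intro T'
    ext x
    rw [clm_eq_sum T' x]
    simp only [hΛdef, ContinuousLinearMap.sum_apply, ContinuousLinearMap.coe_sum',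
      Finset.sum_apply, ContinuousLinearMap.smulRight_apply, ContinuousLinearMap.proj_apply,
      smul_eq_mul]
    exact Finset.sum_congr rfl fun k _ => mul_comm _ _
  have hgd : DifferentiableAt ℝ (fun w k => fderiv ℝ f w (Pi.single k 1)) 0 :=
    differentiableAt_pi.mpr hcomps
  have hfd : DifferentiableAt ℝ (fderiv ℝ f) 0 := by
    have hrw : fderiv ℝ f = fun w => Λ (fun k => fderiv ℝ f w (Pi.single k 1)) :=
      funext fun w => (hΛ _).symm
    rw [hrw]
    exact Λ.differentiableAt.comp 0 hgd
  have hsymm := second_derivative_symmetric_of_eventually hev hfd.hasFDerivAt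
    (Pi.single i 1) (Pi.single j 1)
  -- identify vertD2 with the second derivative of f
  have hv2 : ∀ a b : Fin d, vertD2 F t X A a b
      = fderiv ℝ (fderiv ℝ f) 0 (Pi.single a 1) (Pi.single b 1) := by
    intro a b
    have h1 : (fun v => vertD F t (vertPerturb t X v) A b)
        = fun v => (ContinuousLinearMap.apply ℝ ℝ (Pi.single b 1)) (fderiv ℝ f v) := by
      funext v; exact congrFun (hfderiv_eq v) b
    have h2 : vertD2 F t X A a b
        = fderiv ℝ (fun v => vertD F t (vertPerturb t X v) A b) 0 (Pi.single a 1) := rfl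
    rw [h2, h1]
    have h3 := ((ContinuousLinearMap.apply ℝ ℝ
      (Pi.single b 1 : Fin d → ℝ)).hasFDerivAt.comp 0 hfd.hasFDerivAt).fderiv
    rw [show (⇑(ContinuousLinearMap.apply ℝ ℝ (Pi.single b 1 : Fin d → ℝ)) ∘ fderiv ℝ f)
      = fun v => (ContinuousLinearMap.apply ℝ ℝ (Pi.single b 1 : Fin d → ℝ)) (fderiv ℝ f v)
      from rfl] at h3
    rw [h3]
    simp
  rw [hv2 i j, hv2 j i]
  exact hsymm
end
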